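/- arXiv:2109.14356 — 13 statements merged into one kernel-verified Lean document; each statement's English description precedes it below -/
import Mathlib

section
/- For every real number δ with 0 < δ < 1, it holds that -δ - (1-δ)·log(1-δ) < -9δ²/(18 - 6δ - δ²). -/
lemma log_taylor_lb (δ : ℝ) (h0 : 0 < δ) (h1 : δ < 1) :
    δ + δ^2/2 + δ^3/3 + δ^4/4 + δ^5/5 ≤ -Real.log (1 - δ) := by
  set f : ℝ → ℝ := fun x => -Real.log (1-x) - (x + x^2/2 + x^3/3 + x^4/4 + x^5/5) with hf
  have hderiv : ∀ x ∈ Set.Ioo (0:ℝ) δ, HasDerivAt f (x^5/(1-x)) x := by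
    intro x hx
    have hx1 : (0:ℝ) < 1 - x := by
      have := hx.2; linarith [h1]
    have hlog : HasDerivAt (fun x : ℝ => Real.log (1-x)) ((1-x)⁻¹ * (-1)) x :=
      (Real.hasDerivAt_log (ne_of_gt hx1)).comp x ((hasDerivAt_id x).const_sub 1)
    have hpoly : HasDerivAt (fun x : ℝ => x + x^2/2 + x^3/3 + x^4/4 + x^5/5)
        (1 + x + x^2 + x^3 + x^4) x := by
      have := ((((hasDerivAt_id x).add ((hasDerivAt_pow 2 x).div_const 2)).add
        ((hasDerivAt_pow 3 x).div_const 3)).add ((hasDerivAt_pow 4 x).div_const 4)).add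
        ((hasDerivAt_pow 5 x).div_const 5)
      refine this.congr_deriv ?_
      push_cast
      ring
    have := (hlog.neg).sub hpoly
    refine this.congr_deriv ?_
    field_simp
    ring
  have hcont : ContinuousOn f (Set.Icc 0 δ) := by
    apply ContinuousOn.sub
    · apply ContinuousOn.neg
      apply ContinuousOn.log (by fun_prop)
      intro x hx
      have := hx.2
      have : x < 1 := lt_of_le_of_lt this h1
      have hne : 1 - x ≠ 0 := by intro h'; linarith
      simpa using hne
    · fun_prop
  have hmono : StrictMonoOn f (Set.Icc 0 δ) := by
    apply strictMonoOn_of_deriv_pos (convex_Icc 0 δ) hcont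
    intro x hx
    rw [interior_Icc] at hx
    rw [(hderiv x hx).deriv]
    have hx1 : (0:ℝ) < 1 - x := by linarith [hx.2, h1]
    exact div_pos (pow_pos hx.1 5) hx1
  have h := hmono (Set.left_mem_Icc.mpr h0.le) (Set.right_mem_Icc.mpr h0.le) h0
  simp [hf] at h
  linarith

lemma poly_ineq (x : ℝ) (h0 : 0 < x) (h1 : x < 1) :
    54*x*(6-x) < (x + x^2/2 + x^3/3 + x^4/4 + x^5/5) * (18 - 6*x - x^2)^2 := by
  nlinarith [sq_nonneg x, sq_nonneg (1-x), sq_nonneg (x*(1-x)), pow_pos h0 3, pow_pos h0 4,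
    pow_pos h0 5, sq_nonneg (x^2*(1-x)), sq_nonneg (x^3*(1-x)), mul_pos h0 (sub_pos.mpr h1)]

theorem pade_lower_tail (δ : ℝ) (h0 : 0 < δ) (h1 : δ < 1) :
    -δ - (1 - δ) * Real.log (1 - δ) < -9 * δ ^ 2 / (18 - 6 * δ - δ ^ 2) := by
  set F : ℝ → ℝ := fun x => x + (1-x) * Real.log (1-x) - 9*x^2/(18 - 6*x - x^2) with hF
  have hDpos : ∀ x : ℝ, 0 ≤ x → x < 1 → (0:ℝ) < 18 - 6*x - x^2 := by
    intro x hx0 hx1; nlinarith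
  have hderiv : ∀ x ∈ Set.Ioo (0:ℝ) δ, HasDerivAt F
      (-Real.log (1-x) - 54*x*(6-x)/(18 - 6*x - x^2)^2) x := by
    intro x hx
    have hx1 : (0:ℝ) < 1 - x := by linarith [hx.2, h1]
    have hD : (0:ℝ) < 18 - 6*x - x^2 := hDpos x hx.1.le (by linarith [hx.2])
    have hlog : HasDerivAt (fun x : ℝ => Real.log (1-x)) ((1-x)⁻¹ * (-1)) x :=
      (Real.hasDerivAt_log (ne_of_gt hx1)).comp x ((hasDerivAt_id x).const_sub 1)
    have h1x : HasDerivAt (fun x : ℝ => 1 - x) (-1) x := (hasDerivAt_id x).const_sub 1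
    have hprod : HasDerivAt (fun x : ℝ => (1-x) * Real.log (1-x))
        ((-1) * Real.log (1-x) + (1-x) * ((1-x)⁻¹ * (-1))) x := h1x.mul hlog
    have hnum : HasDerivAt (fun x : ℝ => 9*x^2) (18*x) x := by
      have := (hasDerivAt_pow 2 x).const_mul (9:ℝ)
      refine this.congr_deriv ?_; push_cast; ring
    have hden : HasDerivAt (fun x : ℝ => 18 - 6*x - x^2) (-6 - 2*x) x := by
      have := (((hasDerivAt_id x).const_mul (6:ℝ)).const_sub 18).sub (hasDerivAt_pow 2 x)
      refine this.congr_deriv ?_; push_cast; ring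
    have hdiv : HasDerivAt (fun x : ℝ => 9*x^2/(18 - 6*x - x^2))
        ((18*x * (18 - 6*x - x^2) - 9*x^2 * (-6 - 2*x)) / (18 - 6*x - x^2)^2) x :=
      hnum.div hden (ne_of_gt hD)
    have := ((hasDerivAt_id x).add hprod).sub hdiv
    refine this.congr_deriv ?_
    have hne : (1:ℝ) - x ≠ 0 := ne_of_gt hx1
    have hne2 : (18:ℝ) - 6*x - x^2 ≠ 0 := ne_of_gt hD
    field_simp
    ring
  have hcont : ContinuousOn F (Set.Icc 0 δ) := by
    apply ContinuousOn.sub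
    · apply ContinuousOn.add continuousOn_id
      apply ContinuousOn.mul (by fun_prop)
      apply ContinuousOn.log (by fun_prop)
      intro x hx
      have : x < 1 := lt_of_le_of_lt hx.2 h1
      intro h'; simp only [sub_eq_zero] at h'; linarith [h'.symm]
    · apply ContinuousOn.div (by fun_prop) (by fun_prop)
      intro x hx
      exact ne_of_gt (hDpos x hx.1 (lt_of_le_of_lt hx.2 h1))
  have hmono : StrictMonoOn F (Set.Icc 0 δ) := by
    apply strictMonoOn_of_deriv_pos (convex_Icc 0 δ) hcont
    intro x hx
    rw [interior_Icc] at hx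
    rw [(hderiv x hx).deriv]
    have hx1 : x < 1 := lt_trans hx.2 h1
    have hD : (0:ℝ) < 18 - 6*x - x^2 := hDpos x hx.1.le hx1
    have hD2 : (0:ℝ) < (18 - 6*x - x^2)^2 := by positivity
    have h2 := poly_ineq x hx.1 hx1
    have h3 : 54*x*(6-x)/(18 - 6*x - x^2)^2 < x + x^2/2 + x^3/3 + x^4/4 + x^5/5 := by
      rw [div_lt_iff₀ hD2]; linarith
    have h4 := log_taylor_lb x hx.1 hx1
    linarith
  have h := hmono (Set.left_mem_Icc.mpr h0.le) (Set.right_mem_Icc.mpr h0.le) h0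
  have hF0 : F 0 = 0 := by simp [hF]
  rw [hF0] at h
  simp only [hF] at h
  have heq : -9 * δ ^ 2 / (18 - 6 * δ - δ ^ 2) = -(9*δ^2/(18 - 6*δ - δ^2)) := by ring
  rw [heq]
  linarith
end

section
/- For every real number δ with 0 < δ < 1, it holds that δ + log(1-δ) < -9δ²/(18 - 12δ - δ²). -/
theorem pade_conf_lower (δ : ℝ) (h0 : 0 < δ) (h1 : δ < 1) :
    δ + Real.log (1 - δ) < -9 * δ ^ 2 / (18 - 12 * δ - δ ^ 2) := by
  set G : ℝ → ℝ := fun x => -9 * x ^ 2 / (18 - 12 * x - x ^ 2) - x - Real.log (1 - x) with hG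
  have hDpos : ∀ x : ℝ, 0 ≤ x → x ≤ δ → 0 < 18 - 12 * x - x ^ 2 := by
    intro x hx0 hx
    nlinarith [sq_nonneg x, sq_nonneg (x - 1)]
  have h1xpos : ∀ x : ℝ, x ≤ δ → 0 < 1 - x := fun x hx => by linarith
  have hderiv : ∀ x ∈ Set.Ioo (0:ℝ) δ, HasDerivAt G
      ((-9 * (2 * x) * (18 - 12 * x - x ^ 2) - (-9 * x ^ 2) * (-12 - 2 * x)) /
        (18 - 12 * x - x ^ 2) ^ 2 - 1 - (1 - x)⁻¹ * (-1)) x := by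
    intro x hx
    have hD := hDpos x hx.1.le hx.2.le
    have h1x := h1xpos x hx.2.le
    have hn : HasDerivAt (fun y : ℝ => -9 * y ^ 2) (-9 * (2 * x)) x := by
      simpa using (hasDerivAt_pow 2 x).const_mul (-9 : ℝ)
    have hd : HasDerivAt (fun y : ℝ => 18 - 12 * y - y ^ 2) (-12 - 2 * x) x := by
      have h1 : HasDerivAt (fun y : ℝ => 18 - 12 * y) (-12) x := by
        simpa using ((hasDerivAt_id x).const_mul (12:ℝ)).const_sub 18
      exact h1.sub ((hasDerivAt_pow 2 x).congr_deriv (by norm_num))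
    have hq := hn.div hd hD.ne'
    have hl : HasDerivAt (fun y : ℝ => Real.log (1 - y)) ((1 - x)⁻¹ * (-1)) x := by
      have hin : HasDerivAt (fun y : ℝ => 1 - y) (-1) x := by
        simpa using (hasDerivAt_id x).const_sub 1
      exact (Real.hasDerivAt_log h1x.ne').comp x hin
    exact (hq.sub (hasDerivAt_id x)).sub hl
  have hmono : StrictMonoOn G (Set.Icc 0 δ) := by
    apply strictMonoOn_of_hasDerivWithinAt_pos (convex_Icc 0 δ)
    · apply ContinuousOn.sub
      apply ContinuousOn.sub
      · apply ContinuousOn.div (by fun_prop) (by fun_prop)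
        intro x hx
        exact (hDpos x hx.1 hx.2).ne'
      · fun_prop
      · apply ContinuousOn.log (by fun_prop)
        intro x hx
        exact (h1xpos x hx.2).ne'
    · intro x hx
      rw [interior_Icc] at hx
      exact ((hderiv x hx).hasDerivWithinAt)
    · intro x hx
      rw [interior_Icc] at hx
      have hD := hDpos x hx.1.le hx.2.le
      have h1x := h1xpos x hx.2.le
      have hx0 := hx.1
      have e : (-9 * (2 * x) * (18 - 12 * x - x ^ 2) - (-9 * x ^ 2) * (-12 - 2 * x)) /
          (18 - 12 * x - x ^ 2) ^ 2 - 1 - (1 - x)⁻¹ * (-1)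
          = x ^ 4 * (24 + x) / ((1 - x) * (18 - 12 * x - x ^ 2) ^ 2) := by
        obtain ⟨D, hDd⟩ : ∃ D, D = 18 - 12 * x - x ^ 2 := ⟨_, rfl⟩
        rw [← hDd] at hD ⊢
        field_simp
        rw [hDd]
        ring
      rw [e]
      positivity
  have h0mem : (0:ℝ) ∈ Set.Icc (0:ℝ) δ := by constructor <;> [rfl; exact h0.le]
  have hdmem : δ ∈ Set.Icc (0:ℝ) δ := by constructor <;> [exact h0.le; rfl]
  have := hmono h0mem hdmem h0
  have hG0 : G 0 = 0 := by simp [hG]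
  rw [hG0] at this
  have hGd : G δ = -9 * δ ^ 2 / (18 - 12 * δ - δ ^ 2) - δ - Real.log (1 - δ) := rfl
  rw [hGd] at this
  linarith
end

section
/- Let X₁, …, Xₙ be independent Poisson trials (independent {0,1}-valued random variables with P(Xᵢ = 1) = pᵢ), let X = ∑ᵢ Xᵢ and μ = E[X]. Then for every real δ with 0 < δ < 1, P(X ≥ (1+δ)μ) ≤ exp(-3δ²μ/(6+2δ)). -/
open MeasureTheory ProbabilityTheory

/-- Padé-type lower bound for the logarithm. -/
lemma pade_log {x : ℝ} (hx : 0 ≤ x) :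
    x * (6 + 5 * x) / (2 * x ^ 2 + 8 * x + 6) ≤ Real.log (1 + x) := by
  set f : ℝ → ℝ := fun y => Real.log (1 + y) - y * (6 + 5 * y) / (2 * y ^ 2 + 8 * y + 6)
    with hf
  have hderiv : ∀ y : ℝ, 0 ≤ y →
      HasDerivAt f (1 / (1 + y) -
        ((6 + 10 * y) * (2 * y ^ 2 + 8 * y + 6) - y * (6 + 5 * y) * (4 * y + 8)) /
          (2 * y ^ 2 + 8 * y + 6) ^ 2) y := by
    intro y hy
    have h1 : (0:ℝ) < 1 + y := by linarith
    have hD : (2 * y ^ 2 + 8 * y + 6 : ℝ) ≠ 0 := by positivity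
    have hlog : HasDerivAt (fun z : ℝ => Real.log (1 + z)) (1 / (1 + y)) y := by
      have h := ((hasDerivAt_id y).const_add 1).log h1.ne'
      simpa using h
    have hN : HasDerivAt (fun z : ℝ => z * (6 + 5 * z)) (6 + 10 * y) y := by
      have h := (hasDerivAt_id y).mul (((hasDerivAt_id y).const_mul 5).const_add 6)
      refine h.congr_deriv ?_
      simp only [id_eq]
      ring
    have hDen : HasDerivAt (fun z : ℝ => 2 * z ^ 2 + 8 * z + 6) (4 * y + 8) y := by
      have h := ((((hasDerivAt_pow 2 y)).const_mul 2).add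
        ((hasDerivAt_id y).const_mul 8)).add_const 6
      refine h.congr_deriv ?_
      ring
    exact hlog.sub (hN.div hDen hD)
  have hmono : MonotoneOn f (Set.Ici (0:ℝ)) := by
    apply monotoneOn_of_deriv_nonneg (convex_Ici 0)
    · intro y hy
      exact ((hderiv y hy).continuousAt).continuousWithinAt
    · intro y hy
      rw [interior_Ici] at hy
      exact ((hderiv y (le_of_lt hy)).differentiableAt).differentiableWithinAt
    · intro y hy
      rw [interior_Ici] at hy
      have hy0 : 0 < y := hy
      rw [(hderiv y hy0.le).deriv]
      have h1 : (0:ℝ) < 1 + y := by linarith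
      have hD : (0:ℝ) < 2 * y ^ 2 + 8 * y + 6 := by positivity
      rw [sub_nonneg, div_le_div_iff₀ (pow_pos hD 2) h1]
      nlinarith [pow_nonneg hy0.le 3, pow_nonneg hy0.le 4]
  have h0 : f 0 = 0 := by simp [hf]
  have := hmono (Set.self_mem_Ici) (Set.mem_Ici.mpr hx) hx
  rw [h0] at this
  simpa [hf, sub_nonneg] using this

theorem chernoff_upper_pade {Ω : Type*} [MeasureSpace Ω]
    [IsProbabilityMeasure (ℙ : Measure Ω)]
    (n : ℕ) (X : Fin n → Ω → ℝ) (p : Fin n → ℝ)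
    (hmeas : ∀ i, Measurable (X i))
    (hindep : iIndepFun X ℙ)
    (h01 : ∀ i ω, X i ω = 0 ∨ X i ω = 1)
    (hp : ∀ i, (ℙ {ω | X i ω = 1}).toReal = p i)
    (μ : ℝ) (hμ : μ = ∫ ω, (∑ i, X i ω) ∂ℙ)
    (δ : ℝ) (hδ0 : 0 < δ) (hδ1 : δ < 1) :
    (ℙ {ω | (1 + δ) * μ ≤ ∑ i, X i ω}).toReal ≤
      Real.exp (-3 * δ ^ 2 * μ / (6 + 2 * δ)) := by
  classical
  set t : ℝ := Real.log (1 + δ) with ht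
  have h1δ : (0:ℝ) < 1 + δ := by linarith
  have ht0 : 0 ≤ t := Real.log_nonneg (by linarith)
  have hexpt : Real.exp t = 1 + δ := Real.exp_log h1δ
  -- sets
  set A : Fin n → Set Ω := fun i => {ω | X i ω = 1} with hA
  have hAmeas : ∀ i, MeasurableSet (A i) := fun i => (hmeas i) (measurableSet_singleton 1)
  have hXind : ∀ i, X i = (A i).indicator (fun _ => (1:ℝ)) := by
    intro i
    funext ω
    rcases h01 i ω with h | h
    · rw [Set.indicator_of_notMem]
      · exact h
      · simp only [hA, Set.mem_setOf_eq, h]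
        norm_num
    · rw [Set.indicator_of_mem]
      · exact h
      · simpa [hA] using h
  have hp0 : ∀ i, 0 ≤ p i := fun i => (hp i) ▸ ENNReal.toReal_nonneg
  -- integrability of each X i
  have hXint : ∀ i, Integrable (X i) ℙ := by
    intro i
    rw [hXind i]
    exact (integrable_const (1:ℝ)).indicator (hAmeas i)
  -- expectations
  have hEX : ∀ i, ∫ ω, X i ω ∂ℙ = p i := by
    intro i
    rw [← hp i]
    calc ∫ ω, X i ω ∂ℙ = ∫ ω, (A i).indicator (fun _ => (1:ℝ)) ω ∂ℙ := by rw [← hXind i]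
      _ = (ℙ (A i)).toReal := integral_indicator_one (hAmeas i)
  have hμsum : μ = ∑ i, p i := by
    rw [hμ, integral_finset_sum _ (fun i _ => hXint i)]
    exact Finset.sum_congr rfl fun i _ => hEX i
  have hμ0 : 0 ≤ μ := by
    rw [hμsum]
    exact Finset.sum_nonneg fun i _ => hp0 i
  -- mgf of each X i
  have hmgf_i : ∀ i, mgf (X i) ℙ t = 1 + (Real.exp t - 1) * p i := by
    intro i
    have hfun : (fun ω => Real.exp (t * X i ω)) =
        fun ω => 1 + (A i).indicator (fun _ => Real.exp t - 1) ω := by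
      funext ω
      rcases h01 i ω with h | h
      · rw [h, Set.indicator_of_notMem]
        · simp
        · simp only [hA, Set.mem_setOf_eq, h]; norm_num
      · rw [h, Set.indicator_of_mem (by simpa [hA] using h)]
        rw [mul_one]
        ring
    rw [mgf, hfun]
    rw [integral_add (integrable_const 1)
      ((integrable_const (Real.exp t - 1)).indicator (hAmeas i))]
    rw [integral_const, integral_indicator_const _ (hAmeas i)]
    simp [hp i, mul_comm, smul_eq_mul]
    rw [measureReal_def, mul_comm]
    exact congrArg (· * (Real.exp t - 1)) (hp i)
  -- sum as function
  have hsumfun : (fun ω => ∑ i, X i ω) = ∑ i, X i := by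
    funext ω; simp [Finset.sum_apply]
  -- mgf of sum
  have hmgf_sum : mgf (∑ i, X i) ℙ t = ∏ i, (1 + (Real.exp t - 1) * p i) := by
    rw [hindep.mgf_sum hmeas Finset.univ]
    exact Finset.prod_congr rfl fun i _ => hmgf_i i
  -- bound the mgf
  have hmgf_le : mgf (∑ i, X i) ℙ t ≤ Real.exp ((Real.exp t - 1) * μ) := by
    rw [hmgf_sum, hμsum, Finset.mul_sum, Real.exp_sum]
    apply Finset.prod_le_prod
    · intro i _
      have : 0 ≤ (Real.exp t - 1) * p i :=
        mul_nonneg (by rw [hexpt]; linarith) (hp0 i)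
      linarith
    · intro i _
      have := Real.add_one_le_exp ((Real.exp t - 1) * p i)
      linarith
  -- integrability of exp(t * sum)
  have hSmeas : Measurable (fun ω => ∑ i, X i ω) := Finset.measurable_sum _ fun i _ => hmeas i
  have hSbound : ∀ ω, ∑ i, X i ω ≤ (n:ℝ) := by
    intro ω
    calc ∑ i, X i ω ≤ ∑ _i : Fin n, (1:ℝ) := by
          apply Finset.sum_le_sum
          intro i _
          rcases h01 i ω with h | h <;> rw [h] <;> norm_num
      _ = (n:ℝ) := by simp
  have hint : Integrable (fun ω => Real.exp (t * (∑ i, X i) ω)) ℙ := by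
    apply Integrable.mono' (integrable_const (Real.exp (t * n)))
    · exact ((hSmeas.const_mul t).exp.aestronglyMeasurable).congr
        (by filter_upwards with ω; simp [Finset.sum_apply])
    · filter_upwards with ω
      rw [Real.norm_eq_abs, abs_of_pos (Real.exp_pos _), Real.exp_le_exp]
      have : (∑ i, X i) ω = ∑ i, X i ω := by simp [Finset.sum_apply]
      rw [this]
      exact mul_le_mul_of_nonneg_left (hSbound ω) ht0
  -- Chernoff
  have hchern := measure_ge_le_exp_mul_mgf (X := ∑ i, X i) (μ := ℙ) ((1 + δ) * μ) ht0 hint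
  have hset : {ω | (1 + δ) * μ ≤ ∑ i, X i ω} = {ω | (1 + δ) * μ ≤ (∑ i, X i) ω} := by
    ext ω; simp [Finset.sum_apply]
  rw [hset]
  refine hchern.trans ?_
  have hstep : Real.exp (-t * ((1 + δ) * μ)) * mgf (∑ i, X i) ℙ t ≤
      Real.exp (-t * ((1 + δ) * μ)) * Real.exp ((Real.exp t - 1) * μ) :=
    mul_le_mul_of_nonneg_left hmgf_le (Real.exp_pos _).le
  refine hstep.trans ?_
  rw [← Real.exp_add, Real.exp_le_exp, hexpt]
  -- numeric inequality
  have hlog := pade_log hδ0.le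
  have hDpos : (0:ℝ) < 2 * δ ^ 2 + 8 * δ + 6 := by positivity
  have h6 : (0:ℝ) < 6 + 2 * δ := by linarith
  have hkey : δ + 3 * δ ^ 2 / (6 + 2 * δ) ≤ (1 + δ) * t := by
    have hdd : (2 * δ ^ 2 + 8 * δ + 6 : ℝ) ≠ 0 := hDpos.ne'
    have h66 : (6 + 2 * δ : ℝ) ≠ 0 := h6.ne'
    have h2 : δ + 3 * δ ^ 2 / (6 + 2 * δ) = (1 + δ) * (δ * (6 + 5 * δ) / (2 * δ ^ 2 + 8 * δ + 6)) := by
      field_simp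
      ring
    rw [h2]
    exact mul_le_mul_of_nonneg_left hlog (by linarith)
  have hfinal : δ * μ - t * ((1 + δ) * μ) ≤ -3 * δ ^ 2 * μ / (6 + 2 * δ) := by
    have h66 : (6 + 2 * δ : ℝ) ≠ 0 := h6.ne'
    have h3 : -3 * δ ^ 2 * μ / (6 + 2 * δ) = μ * (-(3 * δ ^ 2 / (6 + 2 * δ))) := by
      ring
    rw [h3]
    have h4 : δ * μ - t * ((1 + δ) * μ) = μ * (δ - (1 + δ) * t) := by ring
    rw [h4]
    apply mul_le_mul_of_nonneg_left _ hμ0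
    linarith
  calc -t * ((1 + δ) * μ) + (1 + δ - 1) * μ = δ * μ - t * ((1 + δ) * μ) := by ring
    _ ≤ -3 * δ ^ 2 * μ / (6 + 2 * δ) := hfinal
end

section
/- Let X₁, …, Xₙ be independent Poisson trials (independent {0,1}-valued random variables with P(Xᵢ = 1) = pᵢ), let X = ∑ᵢ Xᵢ and μ = E[X]. Then for every real δ with 0 < δ < 1, P(X ≤ (1-δ)μ) ≤ exp(-9δ²μ/(18 - 6δ - δ²)). -/
open Real

private noncomputable def psiCLP (x : ℝ) : ℝ :=
  Real.log x + (1 - x) * (2 + 17 * x - x ^ 2) / (x * (11 + 8 * x - x ^ 2))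

private lemma psiCLP_hasDeriv (y : ℝ) (hy : 0 < y) (hy2 : y < 2) :
    HasDerivAt psiCLP ((y - 1) ^ 4 * (y - 22) / (y * (11 + 8 * y - y ^ 2)) ^ 2) y := by
  have hD : y * (11 + 8 * y - y ^ 2) ≠ 0 := by nlinarith
  have hlog := Real.hasDerivAt_log hy.ne'
  have hid := hasDerivAt_id y
  have hsq : HasDerivAt (fun x : ℝ => x ^ 2) (2 * y) y := by
    simpa using hasDerivAt_pow 2 y
  have hN : HasDerivAt (fun x : ℝ => (1 - x) * (2 + 17 * x - x ^ 2))
      ((-1) * (2 + 17 * y - y ^ 2) + (1 - y) * (17 - 2 * y)) y := by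
    have h1 : HasDerivAt (fun x : ℝ => 1 - x) (-1) y := by simpa using hid.const_sub 1
    have h2 : HasDerivAt (fun x : ℝ => 2 + 17 * x - x ^ 2) (17 - 2 * y) y := by
      have := ((hid.const_mul 17).const_add 2).sub hsq
      exact this.congr_deriv (by ring)
    exact h1.mul h2
  have hDd : HasDerivAt (fun x : ℝ => x * (11 + 8 * x - x ^ 2))
      (1 * (11 + 8 * y - y ^ 2) + y * (8 - 2 * y)) y := by
    have h2 : HasDerivAt (fun x : ℝ => 11 + 8 * x - x ^ 2) (8 - 2 * y) y := by
      have := ((hid.const_mul 8).const_add 11).sub hsq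
      exact this.congr_deriv (by ring)
    exact hid.mul h2
  have := hlog.add (hN.div hDd hD)
  refine this.congr_deriv ?_
  rw [inv_eq_one_div, div_add_div _ _ hy.ne' (pow_ne_zero 2 hD),
    div_eq_div_iff (mul_ne_zero hy.ne' (pow_ne_zero 2 hD)) (pow_ne_zero 2 hD)]
  ring

private lemma psiCLP_nonneg {x : ℝ} (hx0 : 0 < x) (hx1 : x < 1) : 0 ≤ psiCLP x := by
  have hanti : StrictAntiOn psiCLP (Set.Icc x 1) := by
    apply strictAntiOn_of_deriv_neg (convex_Icc x 1)
    · intro y hy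
      exact (psiCLP_hasDeriv y (lt_of_lt_of_le hx0 hy.1)
        (lt_of_le_of_lt hy.2 one_lt_two)).differentiableAt.continuousAt.continuousWithinAt
    · intro y hy
      rw [interior_Icc] at hy
      have hy0 : 0 < y := hx0.trans hy.1
      rw [(psiCLP_hasDeriv y hy0 (hy.2.trans one_lt_two)).deriv]
      apply div_neg_of_neg_of_pos
      · have h4 : 0 < (y - 1) ^ 4 := by
          have : (y - 1) ^ 4 = (1 - y) ^ 4 := by ring
          rw [this]; exact pow_pos (by linarith [hy.2]) 4
        exact mul_neg_of_pos_of_neg h4 (by linarith [hy.2])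
      · have : 0 < y * (11 + 8 * y - y ^ 2) := by nlinarith [hy.2]
        positivity
  have h1 : psiCLP 1 < psiCLP x := hanti (Set.left_mem_Icc.2 hx1.le)
    (Set.right_mem_Icc.2 hx1.le) hx1
  have h0 : psiCLP 1 = 0 := by simp [psiCLP]
  linarith

private lemma keyIneqCLP {δ : ℝ} (h0 : 0 < δ) (h1 : δ < 1) :
    9 * δ ^ 2 / (18 - 6 * δ - δ ^ 2) ≤ δ + (1 - δ) * Real.log (1 - δ) := by
  have hx0 : (0:ℝ) < 1 - δ := by linarith
  have hψ := psiCLP_nonneg hx0 (by linarith : (1:ℝ) - δ < 1)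
  unfold psiCLP at hψ
  have hD : 0 < (1 - δ) * (11 + 8 * (1 - δ) - (1 - δ) ^ 2) := by nlinarith
  have hmul := mul_nonneg hψ hD.le
  have heq : (Real.log (1 - δ) + (1 - (1 - δ)) * (2 + 17 * (1 - δ) - (1 - δ) ^ 2) /
        ((1 - δ) * (11 + 8 * (1 - δ) - (1 - δ) ^ 2))) *
        ((1 - δ) * (11 + 8 * (1 - δ) - (1 - δ) ^ 2)) =
      (1 - δ) * (11 + 8 * (1 - δ) - (1 - δ) ^ 2) * Real.log (1 - δ) +
        (1 - (1 - δ)) * (2 + 17 * (1 - δ) - (1 - δ) ^ 2) := by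
    rw [add_mul, div_mul_cancel₀ _ hD.ne']
    ring
  rw [heq] at hmul
  have hden : (0:ℝ) < 18 - 6 * δ - δ ^ 2 := by nlinarith
  rw [div_le_iff₀ hden]
  nlinarith [hmul]

open MeasureTheory ProbabilityTheory

theorem chernoff_lower_pade {Ω : Type*} [MeasureSpace Ω]
    [IsProbabilityMeasure (ℙ : Measure Ω)]
    (n : ℕ) (X : Fin n → Ω → ℝ) (p : Fin n → ℝ)
    (hmeas : ∀ i, Measurable (X i))
    (hindep : iIndepFun X ℙ)
    (h01 : ∀ i ω, X i ω = 0 ∨ X i ω = 1)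
    (hp : ∀ i, (ℙ {ω | X i ω = 1}).toReal = p i)
    (μ : ℝ) (hμ : μ = ∫ ω, (∑ i, X i ω) ∂ℙ)
    (δ : ℝ) (hδ0 : 0 < δ) (hδ1 : δ < 1) :
    (ℙ {ω | ∑ i, X i ω ≤ (1 - δ) * μ}).toReal ≤
      Real.exp (-9 * δ ^ 2 * μ / (18 - 6 * δ - δ ^ 2)) := by
  classical
  set t : ℝ := Real.log (1 - δ) with ht
  have hx0 : (0:ℝ) < 1 - δ := by linarith
  have het : Real.exp t = 1 - δ := Real.exp_log hx0
  have ht0 : t < 0 := Real.log_neg hx0 (by linarith)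
  have hX0 : ∀ i ω, 0 ≤ X i ω := by
    intro i ω; rcases h01 i ω with h | h <;> simp [h]
  have hX1 : ∀ i ω, X i ω ≤ 1 := by
    intro i ω; rcases h01 i ω with h | h <;> simp [h]
  have hXint : ∀ i, Integrable (X i) ℙ := by
    intro i
    refine (integrable_const (1:ℝ)).mono' (hmeas i).aestronglyMeasurable ?_
    filter_upwards with ω
    rw [Real.norm_eq_abs, abs_of_nonneg (hX0 i ω)]
    exact hX1 i ω
  have hpi : ∀ i, ∫ ω, X i ω ∂ℙ = p i := by
    intro i
    have hind : X i = Set.indicator {ω | X i ω = 1} (fun _ => (1:ℝ)) := by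
      funext ω
      rcases h01 i ω with h | h
      · rw [h, Set.indicator_of_notMem]; simp [h]
      · rw [h, Set.indicator_of_mem]; exact h
    have hms : MeasurableSet {ω | X i ω = 1} := hmeas i (measurableSet_singleton 1)
    rw [← hp i, hind, integral_indicator_const _ hms]
    simp; rfl
  have hp01 : ∀ i, 0 ≤ p i ∧ p i ≤ 1 := by
    intro i
    constructor
    · rw [← hpi i]; exact integral_nonneg (hX0 i)
    · rw [← hpi i]
      calc ∫ ω, X i ω ∂ℙ ≤ ∫ _, (1:ℝ) ∂ℙ :=
            integral_mono (hXint i) (integrable_const 1) (hX1 i)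
        _ = 1 := by simp
  have hμsum : μ = ∑ i, p i := by
    rw [hμ, integral_finset_sum _ fun i _ => hXint i]
    simp [hpi]
  have hμ0 : 0 ≤ μ := hμsum ▸ Finset.sum_nonneg fun i _ => (hp01 i).1
  -- mgf of each X i
  have hmgf_i : ∀ i, mgf (X i) ℙ t = 1 + (Real.exp t - 1) * p i := by
    intro i
    have heq : (fun ω => Real.exp (t * X i ω)) = fun ω => 1 + (Real.exp t - 1) * X i ω := by
      funext ω
      rcases h01 i ω with h | h <;> simp [h]
    rw [mgf, heq]
    rw [integral_add (integrable_const 1) ((hXint i).const_mul _), integral_const_mul]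
    simp [hpi i]
  -- mgf of the sum
  have hS_meas : Measurable (fun ω => ∑ i, X i ω) :=
    Finset.measurable_sum Finset.univ fun i _ => hmeas i
  have hsum_mgf : mgf (fun ω => ∑ i, X i ω) ℙ t = ∏ i, mgf (X i) ℙ t := by
    have h := hindep.mgf_sum hmeas Finset.univ (t := t)
    have hfun : (∑ i, X i) = fun ω => ∑ i, X i ω := by
      funext ω; simp [Finset.sum_apply]
    rwa [hfun] at h
  have hmgf_le : mgf (fun ω => ∑ i, X i ω) ℙ t ≤ Real.exp ((Real.exp t - 1) * μ) := by
    rw [hsum_mgf]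
    calc ∏ i, mgf (X i) ℙ t ≤ ∏ i, Real.exp ((Real.exp t - 1) * p i) := by
          apply Finset.prod_le_prod (fun i _ => mgf_nonneg)
          intro i _
          rw [hmgf_i i]
          have := Real.add_one_le_exp ((Real.exp t - 1) * p i)
          linarith
      _ = Real.exp (∑ i, (Real.exp t - 1) * p i) := by rw [Real.exp_sum]
      _ = Real.exp ((Real.exp t - 1) * μ) := by rw [← Finset.mul_sum, ← hμsum]
  -- Markov / Chernoff
  have hint : Integrable (fun ω => Real.exp (t * ∑ i, X i ω)) ℙ := by
    refine (integrable_const (1:ℝ)).mono'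
      ((hS_meas.const_mul t).exp).aestronglyMeasurable ?_
    filter_upwards with ω
    rw [Real.norm_eq_abs, abs_of_nonneg (Real.exp_pos _).le, Real.exp_le_one_iff]
    exact mul_nonpos_of_nonpos_of_nonneg ht0.le
      (Finset.sum_nonneg fun i _ => hX0 i ω)
  have hmarkov := measure_le_le_exp_mul_mgf (X := fun ω => ∑ i, X i ω)
    ((1 - δ) * μ) ht0.le hint
  calc (ℙ {ω | ∑ i, X i ω ≤ (1 - δ) * μ}).toReal
      ≤ Real.exp (-t * ((1 - δ) * μ)) * mgf (fun ω => ∑ i, X i ω) ℙ t := hmarkov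
    _ ≤ Real.exp (-t * ((1 - δ) * μ)) * Real.exp ((Real.exp t - 1) * μ) := by
        exact mul_le_mul_of_nonneg_left hmgf_le (Real.exp_pos _).le
    _ = Real.exp (-t * ((1 - δ) * μ) + (Real.exp t - 1) * μ) := (Real.exp_add _ _).symm
    _ ≤ Real.exp (-9 * δ ^ 2 * μ / (18 - 6 * δ - δ ^ 2)) := by
        rw [Real.exp_le_exp, het]
        have hkey := keyIneqCLP hδ0 hδ1
        have hmul := mul_le_mul_of_nonneg_left hkey hμ0
        rw [← ht] at hmul
        have : -9 * δ ^ 2 * μ / (18 - 6 * δ - δ ^ 2) =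
            -(μ * (9 * δ ^ 2 / (18 - 6 * δ - δ ^ 2))) := by ring
        rw [this]
        nlinarith [hmul]
end

section
/- Let X₁, …, Xₙ be independent Poisson trials, X = ∑ᵢ Xᵢ, μ = E[X] > 0. Fix a tail probability γ with 0 < γ < 1 and set β = (log γ)/μ and δ_L = 3·(β + √(β² - 2β(9 - β)))/(9 - β). Then P(X ≤ (1-δ_L)μ) < γ. -/
open MeasureTheory ProbabilityTheory

/-- Simpson-rule lower bound on the logarithm on `(0,1)`. -/
lemma chernoff_aux_log_lb (x : ℝ) (hx0 : 0 < x) (hx1 : x < 1) :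
    (x-1)/6 + 4*(x-1)/(3*(x+1)) + (x-1)/(6*x) < Real.log x := by
  have hder : ∀ y : ℝ, 0 < y →
      HasDerivAt (fun y : ℝ => Real.log y - ((y-1)/6 + 4*(y-1)/(3*(y+1)) + (y-1)/(6*y)))
        (y⁻¹ - ((1:ℝ)/6 + (4*1*(3*(y+1)) - 4*(y-1)*(3*1))/(3*(y+1))^2
          + (1*(6*y) - (y-1)*(6*1))/(6*y)^2)) y := by
    intro y hy
    have hy1 : (3:ℝ)*(y+1) ≠ 0 := by positivity
    have hy2 : (6:ℝ)*y ≠ 0 := by positivity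
    exact (Real.hasDerivAt_log hy.ne').sub
      ((((((hasDerivAt_id y).sub_const 1).div_const 6).add
        ((((hasDerivAt_id y).sub_const 1).const_mul 4).div
          (((hasDerivAt_id y).add_const 1).const_mul 3) hy1))).add
        (((hasDerivAt_id y).sub_const 1).div
          ((hasDerivAt_id y).const_mul 6) hy2))
  have hanti : StrictAntiOn
      (fun y : ℝ => Real.log y - ((y-1)/6 + 4*(y-1)/(3*(y+1)) + (y-1)/(6*y)))
      (Set.Ioc 0 1) := by
    apply strictAntiOn_of_deriv_neg (convex_Ioc 0 1)
    · exact fun y hy => (hder y hy.1).continuousAt.continuousWithinAt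
    · intro y hy
      rw [interior_Ioc] at hy
      have hy0 : 0 < y := hy.1
      have hy1 : y < 1 := hy.2
      rw [(hder y hy0).deriv]
      have heq : (y⁻¹ - ((1:ℝ)/6 + (4*1*(3*(y+1)) - 4*(y-1)*(3*1))/(3*(y+1))^2
          + (1*(6*y) - (y-1)*(6*1))/(6*y)^2)) = -((y-1)^4/(6*y^2*(y+1)^2)) := by
        have h1 : y ≠ 0 := hy0.ne'
        have h2 : y + 1 ≠ 0 := by positivity
        field_simp
        ring
      rw [heq]
      have h4 : 0 < (y-1)^4 := by
        have h2 : 0 < (y-1)^2 := by nlinarith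
        nlinarith
      have h5 : 0 < 6*y^2*(y+1)^2 := by positivity
      have := div_pos h4 h5
      linarith
  have hx : x ∈ Set.Ioc (0:ℝ) 1 := ⟨hx0, hx1.le⟩
  have h1 : (1:ℝ) ∈ Set.Ioc (0:ℝ) 1 := ⟨one_pos, le_refl 1⟩
  have := hanti hx h1 hx1
  simp only [Real.log_one] at this
  linarith

set_option maxHeartbeats 2000000 in
theorem chernoff_lower_quadratic {Ω : Type*} [MeasureSpace Ω]
    [IsProbabilityMeasure (ℙ : Measure Ω)]
    (n : ℕ) (X : Fin n → Ω → ℝ) (p : Fin n → ℝ)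
    (hmeas : ∀ i, Measurable (X i))
    (hindep : iIndepFun X ℙ)
    (h01 : ∀ i ω, X i ω = 0 ∨ X i ω = 1)
    (hp : ∀ i, (ℙ {ω | X i ω = 1}).toReal = p i)
    (μ : ℝ) (hμ : μ = ∫ ω, (∑ i, X i ω) ∂ℙ) (hμpos : 0 < μ)
    (γ : ℝ) (hγ0 : 0 < γ) (hγ1 : γ < 1)
    (β δL : ℝ) (hβ : β = Real.log γ / μ)
    (hδL : δL = 3 * ((β + Real.sqrt (β ^ 2 - 2 * β * (9 - β))) / (9 - β))) :
    (ℙ {ω | ∑ i, X i ω ≤ (1 - δL) * μ}).toReal < γ := by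
  -- basic facts about X
  have hXnn : ∀ i ω, 0 ≤ X i ω := by
    intro i ω; rcases h01 i ω with h | h <;> rw [h] <;> norm_num
  have hXle1 : ∀ i ω, X i ω ≤ 1 := by
    intro i ω; rcases h01 i ω with h | h <;> rw [h] <;> norm_num
  have hint : ∀ i, Integrable (X i) ℙ := by
    intro i
    refine Integrable.mono' (integrable_const 1) (hmeas i).aestronglyMeasurable ?_
    filter_upwards with ω
    rw [Real.norm_eq_abs, abs_le]
    exact ⟨by linarith [hXnn i ω], hXle1 i ω⟩
  set q : Fin n → ℝ := fun i => ∫ ω, X i ω ∂ℙ with hq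
  have hq0 : ∀ i, 0 ≤ q i := fun i => integral_nonneg (fun ω => hXnn i ω)
  have hq1 : ∀ i, q i ≤ 1 := by
    intro i
    calc q i ≤ ∫ _ω, (1:ℝ) ∂ℙ := integral_mono (hint i) (integrable_const 1) (fun ω => hXle1 i ω)
    _ = 1 := by simp
  have hμsum : μ = ∑ i, q i := by
    rw [hμ]
    exact integral_finset_sum Finset.univ (fun i _ => hint i)
  -- β is negative
  have hβneg : β < 0 := by
    rw [hβ]
    exact div_neg_of_neg_of_pos (Real.log_neg hγ0 hγ1) hμpos
  have h9β : (0:ℝ) < 9 - β := by linarith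
  -- the square root
  set s : ℝ := Real.sqrt (β ^ 2 - 2 * β * (9 - β)) with hs
  have hD : 0 ≤ β ^ 2 - 2 * β * (9 - β) := by nlinarith
  have hs2 : s ^ 2 = β ^ 2 - 2 * β * (9 - β) := Real.sq_sqrt hD
  have hs0 : 0 ≤ s := Real.sqrt_nonneg _
  have hβs : 0 < β + s := by nlinarith
  have hδpos : 0 < δL := by
    rw [hδL]; positivity
  have hδ9 : δL * (9 - β) = 3 * (β + s) := by
    rw [hδL]; field_simp
  -- key algebraic identity
  have key : 9 * δL ^ 2 = β * (δL ^ 2 + 6 * δL - 18) := by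
    have hsq : (δL * (9 - β) - 3 * β) ^ 2 = 9 * (β ^ 2 - 2 * β * (9 - β)) := by
      have h3s : δL * (9 - β) - 3 * β = 3 * s := by linarith
      rw [h3s]; nlinarith [hs2]
    have hfac : (9 - β) * (9 * δL ^ 2 - β * (δL ^ 2 + 6 * δL - 18)) = 0 := by
      linear_combination hsq
    rcases mul_eq_zero.mp hfac with h | h
    · exfalso; linarith
    · linarith
  have hden : 0 < 18 - 6 * δL - δL ^ 2 := by nlinarith [key, mul_pos hδpos hδpos]
  have hβval : β * (18 - 6 * δL - δL ^ 2) = -(9 * δL ^ 2) := by linear_combination key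
  -- γ as an exponential
  have hγexp : Real.exp (β * μ) = γ := by
    have : β * μ = Real.log γ := by rw [hβ]; field_simp
    rw [this, Real.exp_log hγ0]
  -- choose t according to the case
  obtain ⟨t, ht, hEt⟩ : ∃ t : ℝ, t ≤ 0 ∧ Real.exp t - 1 - t * (1 - δL) < β := by
    rcases lt_trichotomy δL 1 with hcase | hcase | hcase
    · -- 0 < δL < 1 : take t = log (1 - δL)
      have hx0 : 0 < 1 - δL := by linarith
      have hx1 : 1 - δL < 1 := by linarith
      refine ⟨Real.log (1 - δL), (Real.log_neg hx0 hx1).le, ?_⟩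
      rw [Real.exp_log hx0]
      have hlog := chernoff_aux_log_lb (1 - δL) hx0 hx1
      set Q : ℝ := ((1-δL)-1)/6 + 4*((1-δL)-1)/(3*((1-δL)+1)) + ((1-δL)-1)/(6*(1-δL)) with hQ
      have hmul : Q * (1 - δL) < Real.log (1 - δL) * (1 - δL) :=
        mul_lt_mul_of_pos_right hlog hx0
      have hQeq : (1 - δL) - 1 - Q * (1 - δL)
          = -(9 * δL ^ 2) / (18 - 6 * δL - δL ^ 2)
            - δL ^ 5 / (6 * (2 - δL) * (18 - 6 * δL - δL ^ 2)) := by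
        rw [hQ]
        have h1 : (1:ℝ) - δL ≠ 0 := hx0.ne'
        have h2 : (2:ℝ) - δL ≠ 0 := by intro h; nlinarith
        have h3 : (18:ℝ) - 6 * δL - δL ^ 2 ≠ 0 := hden.ne'
        rw [div_sub_div _ _ h3 (mul_ne_zero (mul_ne_zero (by norm_num) h2) h3), eq_div_iff (mul_ne_zero h3 (mul_ne_zero (mul_ne_zero (by norm_num) h2) h3))]
        field_simp
        ring
      have hβeq : β = -(9 * δL ^ 2) / (18 - 6 * δL - δL ^ 2) := by
        rw [eq_div_iff hden.ne']; linarith [hβval]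
      have hpos5 : 0 ≤ δL ^ 5 / (6 * (2 - δL) * (18 - 6 * δL - δL ^ 2)) := by
        have h2 : (0:ℝ) < 2 - δL := by linarith
        positivity
      have : (1 - δL) - 1 - Q * (1 - δL) ≤ β := by
        rw [hQeq, ← hβeq]; linarith
      linarith
    · -- δL = 1 : take t = -2
      refine ⟨-2, by norm_num, ?_⟩
      have hβ911 : β = -(9/11) := by
        rw [hcase] at key; nlinarith [key]
      have he1 : (2.7:ℝ) < Real.exp 1 := lt_trans (by norm_num) Real.exp_one_gt_d9
      have h2e : Real.exp 2 = Real.exp 1 * Real.exp 1 := by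
        rw [← Real.exp_add]; norm_num
      have h729 : (7.29:ℝ) < Real.exp 2 := by
        rw [h2e]; nlinarith [he1, Real.exp_pos 1]
      have hm : (Real.exp 2)⁻¹ * Real.exp 2 = 1 := inv_mul_cancel₀ (Real.exp_pos 2).ne'
      have hlt : Real.exp (-2) < 2/11 := by
        rw [Real.exp_neg]
        nlinarith [hm, h729, inv_pos.mpr (Real.exp_pos 2)]
      rw [hcase, hβ911]
      norm_num
      linarith
    · -- δL > 1 : take t = β / (δL - 1)
      have hd1 : 0 < δL - 1 := by linarith
      refine ⟨β / (δL - 1), (div_neg_of_neg_of_pos hβneg hd1).le, ?_⟩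
      have ht0 : β / (δL - 1) < 0 := div_neg_of_neg_of_pos hβneg hd1
      have hexp1 : Real.exp (β / (δL - 1)) < 1 := Real.exp_lt_one_iff.mpr ht0
      have hteq : β / (δL - 1) * (1 - δL) = -β := by
        field_simp
        ring
      rw [hteq]
      linarith
  -- the Chernoff machinery
  have hSnn : ∀ ω, 0 ≤ ∑ i, X i ω := fun ω => Finset.sum_nonneg (fun i _ => hXnn i ω)
  have hSln : ∀ ω, ∑ i, X i ω ≤ n := by
    intro ω
    calc ∑ i, X i ω ≤ ∑ _i : Fin n, (1:ℝ) := Finset.sum_le_sum (fun i _ => hXle1 i ω)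
    _ = n := by simp
  have hSmeas : Measurable (fun ω => ∑ i, X i ω) :=
    Finset.measurable_sum Finset.univ (fun i _ => hmeas i)
  have hint_exp : Integrable (fun ω => Real.exp (t * ∑ i, X i ω)) ℙ := by
    refine Integrable.mono' (integrable_const (Real.exp (|t| * n)))
      ((hSmeas.const_mul t).exp).aestronglyMeasurable ?_
    filter_upwards with ω
    rw [Real.norm_eq_abs, Real.abs_exp, Real.exp_le_exp]
    have h1 := hSnn ω
    have h2 := hSln ω
    nlinarith [le_abs_self t, abs_nonneg t]
  have hfeq : (fun ω => ∑ i, X i ω) = ∑ i, X i := by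
    funext ω; rw [Finset.sum_apply]
  -- per-coordinate mgf
  have hmgf_i : ∀ i, mgf (X i) ℙ t = 1 + (Real.exp t - 1) * q i := by
    intro i
    have hpt : ∀ ω, Real.exp (t * X i ω) = 1 + (Real.exp t - 1) * X i ω := by
      intro ω
      rcases h01 i ω with h | h <;> rw [h] <;> simp
    calc mgf (X i) ℙ t = ∫ ω, Real.exp (t * X i ω) ∂ℙ := rfl
    _ = ∫ ω, (1 + (Real.exp t - 1) * X i ω) ∂ℙ := by
        exact integral_congr_ae (Filter.Eventually.of_forall hpt)
    _ = (∫ _ω, (1:ℝ) ∂ℙ) + ∫ ω, (Real.exp t - 1) * X i ω ∂ℙ := by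
        exact integral_add (integrable_const 1) ((hint i).const_mul _)
    _ = 1 + (Real.exp t - 1) * q i := by
        rw [integral_const_mul]; simp [hq]
  have hmgf_le : mgf (fun ω => ∑ i, X i ω) ℙ t ≤ Real.exp ((Real.exp t - 1) * μ) := by
    rw [hfeq, hindep.mgf_sum hmeas]
    calc ∏ i, mgf (X i) ℙ t = ∏ i, (1 + (Real.exp t - 1) * q i) := by
          exact Finset.prod_congr rfl (fun i _ => hmgf_i i)
    _ ≤ ∏ i, Real.exp ((Real.exp t - 1) * q i) := by
        refine Finset.prod_le_prod (fun i _ => ?_) (fun i _ => ?_)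
        · nlinarith [Real.exp_pos t, hq0 i, hq1 i, mul_nonneg (Real.exp_pos t).le (hq0 i)]
        · linarith [Real.add_one_le_exp ((Real.exp t - 1) * q i)]
    _ = Real.exp (∑ i, (Real.exp t - 1) * q i) := (Real.exp_sum _ _).symm
    _ = Real.exp ((Real.exp t - 1) * μ) := by rw [← Finset.mul_sum, ← hμsum]
  have hcher := measure_le_le_exp_mul_mgf (X := fun ω => ∑ i, X i ω)
    ((1 - δL) * μ) ht hint_exp
  calc (ℙ {ω | ∑ i, X i ω ≤ (1 - δL) * μ}).toReal
      ≤ Real.exp (-t * ((1 - δL) * μ)) * mgf (fun ω => ∑ i, X i ω) ℙ t := hcher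
  _ ≤ Real.exp (-t * ((1 - δL) * μ)) * Real.exp ((Real.exp t - 1) * μ) := by
      exact mul_le_mul_of_nonneg_left hmgf_le (Real.exp_pos _).le
  _ = Real.exp ((Real.exp t - 1 - t * (1 - δL)) * μ) := by
      rw [← Real.exp_add]; ring_nf
  _ < Real.exp (β * μ) := by
      exact Real.exp_lt_exp.mpr (mul_lt_mul_of_pos_right hEt hμpos)
  _ = γ := hγexp
end

section
/- Let X₁, …, Xₙ be independent Poisson trials, X = ∑ᵢ Xᵢ, μ = E[X]. Then for every real δ > 0, P(X ≤ μ/(1+δ)) ≤ exp( ((-δ + log(1+δ))/(1+δ)) · μ ). -/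
open MeasureTheory ProbabilityTheory

theorem chernoff_regression_lower {Ω : Type*} [MeasureSpace Ω]
    [IsProbabilityMeasure (ℙ : Measure Ω)]
    (n : ℕ) (X : Fin n → Ω → ℝ) (p : Fin n → ℝ)
    (hmeas : ∀ i, Measurable (X i))
    (hindep : iIndepFun X ℙ)
    (h01 : ∀ i ω, X i ω = 0 ∨ X i ω = 1)
    (hp : ∀ i, (ℙ {ω | X i ω = 1}).toReal = p i)
    (μ : ℝ) (hμ : μ = ∫ ω, (∑ i, X i ω) ∂ℙ)
    (δ : ℝ) (hδ0 : 0 < δ) :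
    (ℙ {ω | ∑ i, X i ω ≤ μ / (1 + δ)}).toReal ≤
      Real.exp ((-δ + Real.log (1 + δ)) / (1 + δ) * μ) := by
  have h1δ : (0:ℝ) < 1 + δ := by linarith
  set t : ℝ := -Real.log (1 + δ) with ht
  have hlog : 0 < Real.log (1 + δ) := Real.log_pos (by linarith)
  have htneg : t ≤ 0 := by rw [ht]; linarith
  have het : Real.exp t = 1 / (1 + δ) := by
    rw [ht, Real.exp_neg, Real.exp_log h1δ, one_div]
  -- integrability of each X i
  have hXint : ∀ i, Integrable (X i) ℙ := by
    intro i
    refine (integrable_const (1:ℝ)).mono' (hmeas i).aestronglyMeasurable ?_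
    filter_upwards with ω
    rcases h01 i ω with h | h <;> simp [h]
  -- E[X i] = p i
  have hEX : ∀ i, ∫ ω, X i ω ∂ℙ = p i := by
    intro i
    have hset : MeasurableSet {ω | X i ω = 1} := (hmeas i) (measurableSet_singleton 1)
    have heq : (fun ω => X i ω) =
        Set.indicator {ω | X i ω = 1} (fun _ => (1:ℝ)) := by
      funext ω
      rcases h01 i ω with h | h <;> simp [Set.indicator, h]
    rw [heq, integral_indicator_const (1:ℝ) hset]
    simp [measureReal_def, hp i]
  have hμs : μ = ∑ i, p i := by
    rw [hμ, integral_finset_sum _ (fun i _ => hXint i)]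
    exact Finset.sum_congr rfl fun i _ => hEX i
  -- mgf of each X i
  have hmgf : ∀ i, mgf (X i) ℙ t = 1 + (Real.exp t - 1) * p i := by
    intro i
    have heq : (fun ω => Real.exp (t * X i ω)) =
        fun ω => 1 + (Real.exp t - 1) * X i ω := by
      funext ω
      rcases h01 i ω with h | h
      · simp [h]
      · simp [h]
    unfold mgf
    rw [heq, integral_add (integrable_const 1) ((hXint i).const_mul _)]
    rw [integral_const_mul, hEX i]
    simp
  -- measurability and integrability for the sum
  have hSmeas : Measurable (fun ω => ∑ i, X i ω) :=
    Finset.measurable_sum _ (fun i _ => hmeas i)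
  have hSnn : ∀ ω, 0 ≤ ∑ i, X i ω := fun ω =>
    Finset.sum_nonneg fun i _ => by rcases h01 i ω with h | h <;> simp [h]
  have hint : Integrable (fun ω => Real.exp (t * ∑ i, X i ω)) ℙ := by
    refine (integrable_const (1:ℝ)).mono'
      ((Real.measurable_exp.comp (hSmeas.const_mul t)).aestronglyMeasurable) ?_
    filter_upwards with ω
    rw [Real.norm_eq_abs, abs_of_pos (Real.exp_pos _), Real.exp_le_one_iff]
    exact mul_nonpos_of_nonpos_of_nonneg htneg (hSnn ω)
  have hmain := measure_le_le_exp_mul_mgf (X := fun ω => ∑ i, X i ω)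
    (μ / (1 + δ)) htneg hint
  have hmgfsum : mgf (fun ω => ∑ i, X i ω) ℙ t = ∏ i, mgf (X i) ℙ t := by
    have h := hindep.mgf_sum hmeas Finset.univ (t := t)
    have : (fun ω => ∑ i, X i ω) = ∑ i, X i := by
      funext ω; simp [Finset.sum_apply]
    rw [this, h]
  have hprod : ∏ i, mgf (X i) ℙ t ≤ Real.exp ((Real.exp t - 1) * μ) := by
    calc ∏ i, mgf (X i) ℙ t ≤ ∏ i, Real.exp ((Real.exp t - 1) * p i) := by
          apply Finset.prod_le_prod
          · intro i _; exact mgf_nonneg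
          · intro i _
            rw [hmgf i]
            have := Real.add_one_le_exp ((Real.exp t - 1) * p i)
            linarith
      _ = Real.exp ((Real.exp t - 1) * μ) := by
          rw [← Real.exp_sum, hμs, Finset.mul_sum]
  calc (ℙ {ω | ∑ i, X i ω ≤ μ / (1 + δ)}).toReal
      ≤ Real.exp (-t * (μ / (1 + δ))) * mgf (fun ω => ∑ i, X i ω) ℙ t := hmain
    _ ≤ Real.exp (-t * (μ / (1 + δ))) * Real.exp ((Real.exp t - 1) * μ) := by
        apply mul_le_mul_of_nonneg_left _ (Real.exp_pos _).le
        rw [hmgfsum]; exact hprod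
    _ = Real.exp ((-δ + Real.log (1 + δ)) / (1 + δ) * μ) := by
        rw [← Real.exp_add, het, ht]
        congr 1
        field_simp
        ring
end

section
/- Let X₁, …, Xₙ be independent Poisson trials, X = ∑ᵢ Xᵢ, μ = E[X]. Then for every real δ with 0 < δ < 1, P(X ≥ μ/(1-δ)) ≤ exp( ((δ + log(1-δ))/(1-δ)) · μ ). -/
open MeasureTheory ProbabilityTheory

theorem chernoff_regression_upper {Ω : Type*} [MeasureSpace Ω]
    [IsProbabilityMeasure (ℙ : Measure Ω)]
    (n : ℕ) (X : Fin n → Ω → ℝ) (p : Fin n → ℝ)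
    (hmeas : ∀ i, Measurable (X i))
    (hindep : iIndepFun X ℙ)
    (h01 : ∀ i ω, X i ω = 0 ∨ X i ω = 1)
    (hp : ∀ i, (ℙ {ω | X i ω = 1}).toReal = p i)
    (μ : ℝ) (hμ : μ = ∫ ω, (∑ i, X i ω) ∂ℙ)
    (δ : ℝ) (hδ0 : 0 < δ) (hδ1 : δ < 1) :
    (ℙ {ω | μ / (1 - δ) ≤ ∑ i, X i ω}).toReal ≤
      Real.exp ((δ + Real.log (1 - δ)) / (1 - δ) * μ) := by
  have h1δ : (0:ℝ) < 1 - δ := by linarith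
  set t : ℝ := -Real.log (1 - δ) with ht_def
  have ht : 0 < t := by
    have := Real.log_neg h1δ (by linarith)
    simpa [ht_def] using this
  have hexpt : Real.exp t = (1 - δ)⁻¹ := by
    rw [ht_def, Real.exp_neg, Real.exp_log h1δ]
  -- pointwise identity exp(t * X i ω) = 1 + (e^t - 1) * X i ω
  have hpt : ∀ i ω, Real.exp (t * X i ω) = 1 + (Real.exp t - 1) * X i ω := by
    intro i ω
    rcases h01 i ω with h | h <;> simp [h]
  -- p i nonneg
  have hpnn : ∀ i, 0 ≤ p i := fun i => (hp i) ▸ ENNReal.toReal_nonneg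
  -- X i integrable
  have hXint : ∀ i, Integrable (X i) ℙ := by
    intro i
    refine ⟨(hmeas i).aestronglyMeasurable, ?_⟩
    apply HasFiniteIntegral.mono' (hasFiniteIntegral_const (1:ℝ))
    filter_upwards with ω
    rcases h01 i ω with h | h <;> simp [h]
  -- integral of X i = p i
  have hint : ∀ i, ∫ ω, X i ω ∂ℙ = p i := by
    intro i
    have hind : (fun ω => X i ω) = Set.indicator {ω | X i ω = 1} (fun _ => (1:ℝ)) := by
      ext ω
      rcases h01 i ω with h | h
      · simp [Set.indicator, h, Set.mem_setOf_eq]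
      · simp [Set.indicator, h, Set.mem_setOf_eq]
    have hmset : MeasurableSet {ω | X i ω = 1} := (hmeas i) (measurableSet_singleton 1)
    rw [hind, integral_indicator_const _ hmset, ← hp i]
    simp
    rfl
  have hμeq : μ = ∑ i, p i := by
    rw [hμ, integral_finset_sum _ (fun i _ => hXint i)]
    exact Finset.sum_congr rfl fun i _ => hint i
  -- integrability of exp(t * X i)
  have hexpint : ∀ i, Integrable (fun ω => Real.exp (t * X i ω)) ℙ := by
    intro i
    have : (fun ω => Real.exp (t * X i ω)) = fun ω => 1 + (Real.exp t - 1) * X i ω := by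
      funext ω; exact hpt i ω
    rw [this]
    exact (integrable_const 1).add ((hXint i).const_mul _)
  -- mgf of each X i
  have hmgf : ∀ i, mgf (X i) ℙ t = 1 + (Real.exp t - 1) * p i := by
    intro i
    unfold mgf
    calc ∫ ω, Real.exp (t * X i ω) ∂ℙ = ∫ ω, (1 + (Real.exp t - 1) * X i ω) ∂ℙ := by
          congr 1; funext ω; exact hpt i ω
      _ = 1 + (Real.exp t - 1) * p i := by
          rw [integral_add (integrable_const 1) ((hXint i).const_mul _),
            integral_const_mul, hint i]
          simp
  -- integrability of exp(t * sum)
  have hsum_int : Integrable (fun ω => Real.exp (t * ∑ i, X i ω)) ℙ := by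
    have := hindep.integrable_exp_mul_sum (t := t) hmeas
      (s := Finset.univ) (fun i _ => hexpint i)
    simpa [Finset.sum_apply] using this
  -- Chernoff
  have hcher := measure_ge_le_exp_mul_mgf (μ := ℙ) (X := fun ω => ∑ i, X i ω)
    (μ / (1 - δ)) ht.le hsum_int
  have hmgfsum : mgf (fun ω => ∑ i, X i ω) ℙ t = ∏ i, mgf (X i) ℙ t := by
    have h := hindep.mgf_sum (t := t) hmeas Finset.univ
    have he : (fun ω => ∑ i, X i ω) = ∑ i, X i := by
      funext ω; simp [Finset.sum_apply]
    rw [he, h]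
  have hprod : ∏ i, mgf (X i) ℙ t ≤ Real.exp ((Real.exp t - 1) * μ) := by
    rw [hμeq, Finset.mul_sum, Real.exp_sum]
    apply Finset.prod_le_prod
    · intro i _
      rw [hmgf i]
      have : 0 ≤ (Real.exp t - 1) * p i :=
        mul_nonneg (by linarith [Real.add_one_le_exp t]) (hpnn i)
      linarith
    · intro i _
      rw [hmgf i]
      have := Real.add_one_le_exp ((Real.exp t - 1) * p i)
      linarith
  calc (ℙ {ω | μ / (1 - δ) ≤ ∑ i, X i ω}).toReal
      ≤ Real.exp (-t * (μ / (1 - δ))) * mgf (fun ω => ∑ i, X i ω) ℙ t := hcher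
    _ ≤ Real.exp (-t * (μ / (1 - δ))) * Real.exp ((Real.exp t - 1) * μ) := by
        apply mul_le_mul_of_nonneg_left _ (Real.exp_nonneg _)
        rw [hmgfsum]; exact hprod
    _ = Real.exp ((δ + Real.log (1 - δ)) / (1 - δ) * μ) := by
        rw [← Real.exp_add]
        congr 1
        rw [hexpt, ht_def]
        field_simp
        ring
end

section
/- Let 0 < γ < 1, let μ̂ > 0 be a real number, set β = (log γ)/μ̂, and let δ_U = (-2β + √(4β² - 18β))/3 (the positive root of 3δ² + 4βδ + 6β = 0). Then (-δ_U + log(1+δ_U))·μ̂ ≤ log γ. -/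
lemma pade_log_upper (x : ℝ) (hx : 0 ≤ x) :
    Real.log (1 + x) ≤ (x ^ 2 + 6 * x) / (4 * x + 6) := by
  set f : ℝ → ℝ := fun t => (t ^ 2 + 6 * t) / (4 * t + 6) - Real.log (1 + t) with hf
  have hderiv : ∀ t : ℝ, 0 ≤ t →
      HasDerivAt f (((2 * t + 6) * (4 * t + 6) - (t ^ 2 + 6 * t) * 4) / (4 * t + 6) ^ 2
        - 1 / (1 + t)) t := by
    intro t ht
    have hden : (4 * t + 6 : ℝ) ≠ 0 := by positivity
    have h1t : (1 + t : ℝ) ≠ 0 := by positivity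
    have h1 : HasDerivAt (fun t : ℝ => t ^ 2 + 6 * t) (2 * t + 6) t := by
      have := ((hasDerivAt_pow 2 t).add ((hasDerivAt_id t).const_mul 6))
      simp at this; exact this
    have h2 : HasDerivAt (fun t : ℝ => 4 * t + 6) 4 t := by
      have := ((hasDerivAt_id t).const_mul 4).add_const 6
      simpa using this
    have h3 := h1.div h2 hden
    have h4 : HasDerivAt (fun t : ℝ => Real.log (1 + t)) (1 / (1 + t)) t := by
      have h5 : HasDerivAt (fun t : ℝ => 1 + t) 1 t := by
        simpa using (hasDerivAt_id t).const_add 1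
      simpa using h5.log h1t
    exact h3.sub h4
  have hdiff : ∀ t ∈ Set.Ici (0 : ℝ), DifferentiableAt ℝ f t := fun t ht =>
    (hderiv t ht).differentiableAt
  have hmono : MonotoneOn f (Set.Ici 0) := by
    apply monotoneOn_of_deriv_nonneg (convex_Ici 0)
    · exact fun t ht => (hdiff t ht).continuousAt.continuousWithinAt
    · intro t ht
      rw [interior_Ici] at ht
      exact ((hdiff t (le_of_lt (show (0 : ℝ) < t from ht))).differentiableWithinAt)
    · intro t ht
      rw [interior_Ici] at ht
      have ht' : (0 : ℝ) < t := ht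
      rw [(hderiv t ht'.le).deriv]
      rw [sub_nonneg, div_le_div_iff₀ (by positivity) (by positivity)]
      nlinarith [ht'.le, sq_nonneg t]
  have h0 : f 0 ≤ f x := hmono (Set.self_mem_Ici) hx hx
  have hf0 : f 0 = 0 := by simp [hf]
  have := h0
  rw [hf0] at this
  simp only [hf] at this
  linarith

theorem inversion_conf_upper (γ μhat : ℝ) (hγ0 : 0 < γ) (hγ1 : γ < 1) (hμ : 0 < μhat)
    (β δU : ℝ) (hβ : β = Real.log γ / μhat)
    (hδU : δU = (-2 * β + Real.sqrt (4 * β ^ 2 - 18 * β)) / 3) :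
    (-δU + Real.log (1 + δU)) * μhat ≤ Real.log γ := by
  have hlogγ : Real.log γ < 0 := Real.log_neg hγ0 hγ1
  have hβneg : β < 0 := by rw [hβ]; exact div_neg_of_neg_of_pos hlogγ hμ
  have hD : (0 : ℝ) ≤ 4 * β ^ 2 - 18 * β := by nlinarith
  have hs : Real.sqrt (4 * β ^ 2 - 18 * β) ^ 2 = 4 * β ^ 2 - 18 * β := Real.sq_sqrt hD
  have hsnn : 0 ≤ Real.sqrt (4 * β ^ 2 - 18 * β) := Real.sqrt_nonneg _
  have hδ0 : 0 ≤ δU := by rw [hδU]; nlinarith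
  have hquad : 3 * δU ^ 2 + 4 * β * δU + 6 * β = 0 := by
    rw [hδU]; linear_combination hs / 3
  have h46 : (0 : ℝ) < 4 * δU + 6 := by linarith
  have hβeq : (δU ^ 2 + 6 * δU) / (4 * δU + 6) = δU + β := by
    rw [div_eq_iff (ne_of_gt h46)]; nlinarith [hquad]
  have hkey : Real.log (1 + δU) ≤ δU + β := by
    rw [← hβeq]; exact pade_log_upper δU hδ0
  have hineq : -δU + Real.log (1 + δU) ≤ β := by linarith
  have : (-δU + Real.log (1 + δU)) * μhat ≤ β * μhat :=
    mul_le_mul_of_nonneg_right hineq hμ.le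
  calc (-δU + Real.log (1 + δU)) * μhat ≤ β * μhat := this
    _ = Real.log γ := by rw [hβ]; field_simp
end

section
/- Let X₁, …, Xₙ be independent Poisson trials, X = ∑ᵢ Xᵢ. Let 0 < γ < 1, let μ̂ > 0 be a real number, set β = (log γ)/μ̂ and δ_U = (-2β + √(4β² - 18β))/3. If E[X] ≥ (1+δ_U)·μ̂, then P(X ≤ μ̂) ≤ γ. -/
open MeasureTheory ProbabilityTheory

lemma log_key {x : ℝ} (hx : 0 ≤ x) : Real.log (1+x) ≤ x*(x+6)/(4*x+6) := by
  have hmono : MonotoneOn (fun x : ℝ => x*(x+6)/(4*x+6) - Real.log (1+x)) (Set.Ici 0) := by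
    apply monotoneOn_of_deriv_nonneg (convex_Ici 0)
    · apply ContinuousOn.sub
      · apply ContinuousOn.div (by fun_prop) (by fun_prop)
        intro y hy; simp at hy; positivity
      · apply ContinuousOn.log (by fun_prop)
        intro y hy; simp at hy; positivity
    · intro y hy
      rw [interior_Ici] at hy
      simp at hy
      apply DifferentiableAt.differentiableWithinAt
      apply DifferentiableAt.sub
      · apply DifferentiableAt.div (by fun_prop) (by fun_prop); positivity
      · exact (Real.differentiableAt_log (by positivity)).comp y (by fun_prop)
    · intro y hy
      rw [interior_Ici] at hy
      simp at hy
      have h1 : (4*y+6) ≠ 0 := by positivity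
      have h2 : (1+y) ≠ 0 := by positivity
      have hd : HasDerivAt (fun x : ℝ => x*(x+6)/(4*x+6) - Real.log (1+x))
          (((1*(y+6) + y*1)*(4*y+6) - y*(y+6)*4)/(4*y+6)^2 - (1/(1+y))) y := by
        apply HasDerivAt.sub
        · have := (((hasDerivAt_id y).mul ((hasDerivAt_id y).add_const 6)).div
            (((hasDerivAt_id y).const_mul 4).add_const 6) h1)
          simp only [id] at this
          exact this.congr_deriv (by simp)
        · have := (Real.hasDerivAt_log h2).comp y (((hasDerivAt_id y).const_add 1))
          simpa [Function.comp_def] using this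
      rw [hd.deriv]
      rw [sub_nonneg, div_le_div_iff₀ (by positivity) (by positivity)]
      nlinarith [sq_nonneg y, sq_nonneg (4*y+6), mul_pos hy (mul_pos hy hy)]
  have h0 : (0:ℝ) ∈ Set.Ici (0:ℝ) := by simp
  have := hmono h0 (Set.mem_Ici.mpr hx) hx
  simp at this
  linarith

theorem conf_upper_bound {Ω : Type*} [MeasureSpace Ω]
    [IsProbabilityMeasure (ℙ : Measure Ω)]
    (n : ℕ) (X : Fin n → Ω → ℝ) (p : Fin n → ℝ)
    (hmeas : ∀ i, Measurable (X i))
    (hindep : iIndepFun X ℙ)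
    (h01 : ∀ i ω, X i ω = 0 ∨ X i ω = 1)
    (hp : ∀ i, (ℙ {ω | X i ω = 1}).toReal = p i)
    (γ μhat : ℝ) (hγ0 : 0 < γ) (hγ1 : γ < 1) (hμhat : 0 < μhat)
    (β δU : ℝ) (hβ : β = Real.log γ / μhat)
    (hδU : δU = (-2 * β + Real.sqrt (4 * β ^ 2 - 18 * β)) / 3)
    (hE : (1 + δU) * μhat ≤ ∫ ω, (∑ i, X i ω) ∂ℙ) :
    (ℙ {ω | ∑ i, X i ω ≤ μhat}).toReal ≤ γ := by
  -- algebraic part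
  have hlogγ : Real.log γ < 0 := Real.log_neg hγ0 hγ1
  have hβ0 : β < 0 := by rw [hβ]; exact div_neg_of_neg_of_pos hlogγ hμhat
  set s := Real.sqrt (4 * β ^ 2 - 18 * β) with hs
  have hs0 : 0 ≤ s := Real.sqrt_nonneg _
  have hs2 : s ^ 2 = 4 * β ^ 2 - 18 * β := Real.sq_sqrt (by nlinarith)
  have hδ0 : 0 < δU := by rw [hδU]; nlinarith
  have hβδ : β * (4 * δU + 6) = -3 * δU ^ 2 := by
    have h3 : 3 * δU = -2 * β + s := by rw [hδU]; ring
    have : s = 3 * δU + 2 * β := by linarith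
    nlinarith [hs2]
  have hkey : Real.log (1 + δU) - δU ≤ β := by
    have h46 : (0:ℝ) < 4 * δU + 6 := by linarith
    have h1 := log_key hδ0.le
    have h2 : δU * (δU + 6) / (4 * δU + 6) - δU = β := by
      field_simp
      nlinarith [hβδ]
    linarith
  -- probabilistic part
  set t := -Real.log (1 + δU) with htdef
  have h1δ : (0:ℝ) < 1 + δU := by linarith
  have hlog1δ : 0 ≤ Real.log (1 + δU) := Real.log_nonneg (by linarith)
  have ht0 : t ≤ 0 := by simp [htdef]; linarith
  have het : Real.exp t = (1 + δU)⁻¹ := by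
    rw [htdef, Real.exp_neg, Real.exp_log h1δ]
  have hXnn : ∀ i ω, 0 ≤ X i ω := by
    intro i ω; rcases h01 i ω with h | h <;> simp [h]
  have hXle : ∀ i ω, X i ω ≤ 1 := by
    intro i ω; rcases h01 i ω with h | h <;> simp [h]
  have hXint : ∀ i, Integrable (X i) ℙ := by
    intro i
    refine Integrable.mono' (integrable_const 1) (hmeas i).aestronglyMeasurable ?_
    filter_upwards with ω
    rw [Real.norm_eq_abs, abs_le]
    exact ⟨by linarith [hXnn i ω], hXle i ω⟩
  set m : Fin n → ℝ := fun i => ∫ ω, X i ω ∂ℙ with hm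
  have hm0 : ∀ i, 0 ≤ m i := fun i => integral_nonneg (fun ω => hXnn i ω)
  have hm1 : ∀ i, m i ≤ 1 := by
    intro i
    calc m i ≤ ∫ _, (1:ℝ) ∂ℙ := integral_mono (hXint i) (integrable_const 1) (hXle i)
    _ = 1 := by simp
  -- integrability of exp(t * S)
  have hsum_fn : (∑ i, X i) = fun ω => ∑ i, X i ω := by
    ext ω; rw [Finset.sum_apply]
  have hSmeas : Measurable (∑ i, X i) := by
    rw [hsum_fn]; exact Finset.measurable_sum Finset.univ (fun i _ => hmeas i)
  have hSint : Integrable (fun ω => Real.exp (t * (∑ i, X i) ω)) ℙ := by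
    refine Integrable.mono' (integrable_const 1) ?_ ?_
    · exact (Real.measurable_exp.comp (hSmeas.const_mul t)).aestronglyMeasurable
    · filter_upwards with ω
      rw [Real.norm_eq_abs, abs_of_pos (Real.exp_pos _), ← Real.exp_zero]
      apply Real.exp_le_exp.2
      have h0 : 0 ≤ (∑ i, X i) ω := by
        rw [Finset.sum_apply]
        exact Finset.sum_nonneg (fun i _ => hXnn i ω)
      exact mul_nonpos_of_nonpos_of_nonneg ht0 h0
  have hchern := measure_le_le_exp_mul_mgf (X := ∑ i, X i) (μ := ℙ) μhat ht0 hSint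
  have hset : {ω | ∑ i, X i ω ≤ μhat} = {ω | (∑ i, X i) ω ≤ μhat} := by
    ext ω; simp [Finset.sum_apply]
  -- mgf of each Bernoulli
  have hmgf_i : ∀ i, mgf (X i) ℙ t = 1 + (Real.exp t - 1) * m i := by
    intro i
    have hpt : ∀ ω, Real.exp (t * X i ω) = 1 + (Real.exp t - 1) * X i ω := by
      intro ω; rcases h01 i ω with h | h <;> simp [h]
    calc mgf (X i) ℙ t = ∫ ω, Real.exp (t * X i ω) ∂ℙ := rfl
    _ = ∫ ω, (1 + (Real.exp t - 1) * X i ω) ∂ℙ := by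
        exact integral_congr_ae (Filter.Eventually.of_forall hpt)
    _ = 1 + (Real.exp t - 1) * m i := by
        rw [integral_add (integrable_const 1) ((hXint i).const_mul _),
          MeasureTheory.integral_const_mul]
        simp [hm]
  have hmgf_sum := hindep.mgf_sum (t := t) hmeas Finset.univ
  have hexpt1 : Real.exp t - 1 ≤ 0 := by
    have : Real.exp t ≤ 1 := by rw [← Real.exp_zero]; exact Real.exp_le_exp.2 ht0
    linarith
  have hexpt0 : 0 < Real.exp t := Real.exp_pos _
  -- product bound
  have hprod : ∏ i, mgf (X i) ℙ t ≤ Real.exp ((Real.exp t - 1) * ∑ i, m i) := by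
    calc ∏ i, mgf (X i) ℙ t ≤ ∏ i, Real.exp ((Real.exp t - 1) * m i) := by
          apply Finset.prod_le_prod
          · intro i _
            rw [hmgf_i i]
            nlinarith [hm0 i, hm1 i]
          · intro i _
            rw [hmgf_i i]
            linarith [Real.add_one_le_exp ((Real.exp t - 1) * m i)]
    _ = Real.exp ((Real.exp t - 1) * ∑ i, m i) := by
          rw [← Real.exp_sum, Finset.mul_sum]
  have hμI : ∫ ω, (∑ i, X i ω) ∂ℙ = ∑ i, m i := by
    rw [← integral_finset_sum Finset.univ (fun i _ => hXint i)]
  have hEm : (1 + δU) * μhat ≤ ∑ i, m i := by rw [← hμI]; exact hE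
  -- putting it together
  have hfinal : Real.exp (-t * μhat) * mgf (∑ i, X i) ℙ t ≤ γ := by
    rw [hmgf_sum]
    calc Real.exp (-t * μhat) * ∏ i, mgf (X i) ℙ t
        ≤ Real.exp (-t * μhat) * Real.exp ((Real.exp t - 1) * ∑ i, m i) := by
          apply mul_le_mul_of_nonneg_left hprod (Real.exp_pos _).le
    _ = Real.exp (-t * μhat + (Real.exp t - 1) * ∑ i, m i) := by rw [← Real.exp_add]
    _ ≤ Real.exp (-t * μhat + (Real.exp t - 1) * ((1 + δU) * μhat)) := by
          apply Real.exp_le_exp.2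
          have := mul_le_mul_of_nonpos_left hEm hexpt1
          linarith
    _ = Real.exp ((Real.log (1 + δU) - δU) * μhat) := by
          congr 1
          rw [het, htdef]
          field_simp
          ring
    _ ≤ Real.exp (Real.log γ) := by
          apply Real.exp_le_exp.2
          have : β * μhat = Real.log γ := by rw [hβ]; field_simp
          nlinarith [hkey]
    _ = γ := Real.exp_log hγ0
  calc (ℙ {ω | ∑ i, X i ω ≤ μhat}).toReal
      ≤ Real.exp (-t * μhat) * mgf (∑ i, X i) ℙ t := by rw [hset]; exact hchern
  _ ≤ γ := hfinal
end

section
/- Let X₁, …, Xₙ be independent Poisson trials, X = ∑ᵢ Xᵢ. Let 0 < γ < 1, let μ̂ > 0 be a real number, set β = (log γ)/μ̂ and δ_L = (6β + √(36β² - 18β(9-β)))/(9-β). If E[X] ≤ (1-δ_L)·μ̂, then P(X ≥ μ̂) ≤ γ. -/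
open MeasureTheory ProbabilityTheory Real

private lemma key_deriv (y : ℝ) (hy : y ∈ Set.Ioo (0:ℝ) 1) :
    HasDerivAt (fun x => 9*x^2/(x^2+12*x-18) - x - Real.log (1-x))
      ((18*y*(y^2+12*y-18) - 9*y^2*(2*y+12))/(y^2+12*y-18)^2 - 1 - (-1)/(1-y)) y := by
  obtain ⟨hy0, hy1⟩ := hy
  have hQ : y^2+12*y-18 ≠ 0 := by nlinarith
  have h1y : (1:ℝ) - y ≠ 0 := by linarith
  have h1 : HasDerivAt (fun x : ℝ => 9*x^2) (18*y) y := by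
    have := (hasDerivAt_pow 2 y).const_mul (9:ℝ)
    simpa using this.congr_deriv (by ring)
  have h2 : HasDerivAt (fun x : ℝ => x^2+12*x-18) (2*y+12) y := by
    have := ((hasDerivAt_pow 2 y).add ((hasDerivAt_id y).const_mul 12)).sub_const 18
    simpa using this.congr_deriv (by ring)
  have hdiv := h1.div h2 hQ
  have h3 : HasDerivAt (fun x : ℝ => 1 - x) (-1) y := by
    simpa using (hasDerivAt_id y).const_sub 1
  have hlog := h3.log h1y
  exact (hdiv.sub (hasDerivAt_id y)).sub hlog |>.congr_deriv (by ring)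

lemma key_ineq (x : ℝ) (h0 : 0 ≤ x) (h1 : x < 1) :
    x + Real.log (1 - x) ≤ 9 * x^2 / (x^2 + 12*x - 18) := by
  set f : ℝ → ℝ := fun x => 9*x^2/(x^2+12*x-18) - x - Real.log (1-x) with hf
  have hint : interior (Set.Ico (0:ℝ) 1) = Set.Ioo 0 1 := interior_Ico
  have hmono : MonotoneOn f (Set.Ico 0 1) := by
    apply monotoneOn_of_deriv_nonneg (convex_Ico 0 1)
    · apply ContinuousOn.sub
      apply ContinuousOn.sub
      · apply ContinuousOn.div (by fun_prop) (by fun_prop)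
        intro y hy
        obtain ⟨hy0, hy1⟩ := hy
        nlinarith
      · exact continuousOn_id
      · apply ContinuousOn.log (by fun_prop)
        intro y hy
        obtain ⟨hy0, hy1⟩ := hy
        intro h; linarith [h]
        -- 1 - y ≠ 0
    · rw [hint]
      intro y hy
      exact (key_deriv y hy).differentiableAt.differentiableWithinAt
    · rw [hint]
      intro y hy
      rw [(key_deriv y hy).deriv]
      obtain ⟨hy0, hy1⟩ := hy
      have hQ : y^2+12*y-18 < 0 := by nlinarith
      have h1y : (0:ℝ) < 1 - y := by linarith
      rw [sub_nonneg]
      have key : 108*y*(3-y) / (y^2+12*y-18)^2 ≤ y/(1-y) := by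
        rw [div_le_div_iff₀ (pow_two_pos_of_ne_zero hQ.ne) h1y]
        nlinarith [sq_nonneg y, sq_nonneg (y*y)]
      have hrw : (18*y*(y^2+12*y-18) - 9*y^2*(2*y+12))/(y^2+12*y-18)^2
          = -(108*y*(3-y) / (y^2+12*y-18)^2) := by
        rw [← neg_div]; congr 1; ring
      have hrw2 : 1 + (-1)/(1-y) = -(y/(1-y)) := by
        field_simp; ring
      rw [hrw]; linarith
  have h := hmono (Set.mem_Ico.2 ⟨le_refl 0, one_pos⟩) (Set.mem_Ico.2 ⟨h0, h1⟩) h0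
  simp only [hf] at h
  norm_num at h
  linarith

lemma chernoff_aux {Ω : Type*} [MeasureSpace Ω]
    [IsProbabilityMeasure (ℙ : Measure Ω)]
    (n : ℕ) (X : Fin n → Ω → ℝ)
    (hmeas : ∀ i, Measurable (X i))
    (hindep : iIndepFun X ℙ)
    (h01 : ∀ i ω, X i ω = 0 ∨ X i ω = 1)
    (t a : ℝ) (ht : 0 ≤ t) :
    (ℙ {ω | a ≤ ∑ i, X i ω}).toReal
      ≤ Real.exp (-t * a + (Real.exp t - 1) * ∫ ω, (∑ i, X i ω) ∂ℙ) := by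
  have hXint : ∀ i, Integrable (X i) ℙ := by
    intro i
    refine Integrable.mono' (integrable_const 1) (hmeas i).aestronglyMeasurable ?_
    refine ae_of_all _ fun ω => ?_
    rcases h01 i ω with h | h <;> rw [h] <;> norm_num
  have hexp_eq : ∀ i ω, Real.exp (t * X i ω) = 1 + (Real.exp t - 1) * X i ω := by
    intro i ω
    rcases h01 i ω with h | h <;> rw [h] <;> simp
  have hexpint : ∀ i, Integrable (fun ω => Real.exp (t * X i ω)) ℙ := by
    intro i
    have : (fun ω => Real.exp (t * X i ω)) = fun ω => 1 + (Real.exp t - 1) * X i ω := by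
      funext ω; exact hexp_eq i ω
    rw [this]
    exact (integrable_const 1).add ((hXint i).const_mul _)
  have hmgf : ∀ i, mgf (X i) ℙ t = 1 + (Real.exp t - 1) * ∫ ω, X i ω ∂ℙ := by
    intro i
    unfold mgf
    calc ∫ ω, Real.exp (t * X i ω) ∂ℙ = ∫ ω, (1 + (Real.exp t - 1) * X i ω) ∂ℙ := by
          congr 1; funext ω; exact hexp_eq i ω
      _ = 1 + (Real.exp t - 1) * ∫ ω, X i ω ∂ℙ := by
          rw [integral_add (integrable_const 1) ((hXint i).const_mul _), integral_const,
            integral_const_mul]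
          simp
  have hsum_int : Integrable (fun ω => Real.exp (t * (∑ i, X i) ω)) ℙ :=
    hindep.integrable_exp_mul_sum hmeas (fun i _ => hexpint i)
  have hset : {ω | a ≤ ∑ i, X i ω} = {ω | a ≤ (∑ i, X i) ω} := by
    ext ω; simp [Finset.sum_apply]
  have hchern := measure_ge_le_exp_mul_mgf (X := ∑ i, X i) (μ := ℙ) a ht hsum_int
  rw [hset]
  refine hchern.trans ?_
  have hprod : mgf (∑ i, X i) ℙ t = ∏ i, mgf (X i) ℙ t := hindep.mgf_sum hmeas Finset.univ
  have hbound : mgf (∑ i, X i) ℙ t ≤ Real.exp ((Real.exp t - 1) * ∫ ω, (∑ i, X i ω) ∂ℙ) := by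
    rw [hprod]
    have h1 : ∀ i ∈ Finset.univ, mgf (X i) ℙ t ≤ Real.exp ((Real.exp t - 1) * ∫ ω, X i ω ∂ℙ) := by
      intro i _
      rw [hmgf i]
      have := Real.add_one_le_exp ((Real.exp t - 1) * ∫ ω, X i ω ∂ℙ)
      linarith
    calc ∏ i, mgf (X i) ℙ t ≤ ∏ i, Real.exp ((Real.exp t - 1) * ∫ ω, X i ω ∂ℙ) :=
          Finset.prod_le_prod (fun i _ => mgf_nonneg) h1
      _ = Real.exp (∑ i, (Real.exp t - 1) * ∫ ω, X i ω ∂ℙ) := by rw [Real.exp_sum]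
      _ = Real.exp ((Real.exp t - 1) * ∫ ω, (∑ i, X i ω) ∂ℙ) := by
          rw [← Finset.mul_sum, ← integral_finset_sum _ (fun i _ => hXint i)]
  calc Real.exp (-t * a) * mgf (∑ i, X i) ℙ t
      ≤ Real.exp (-t * a) * Real.exp ((Real.exp t - 1) * ∫ ω, (∑ i, X i ω) ∂ℙ) := by
        exact mul_le_mul_of_nonneg_left hbound (Real.exp_pos _).le
    _ = Real.exp (-t * a + (Real.exp t - 1) * ∫ ω, (∑ i, X i ω) ∂ℙ) := by rw [← Real.exp_add]

theorem conf_lower_bound {Ω : Type*} [MeasureSpace Ω]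
    [IsProbabilityMeasure (ℙ : Measure Ω)]
    (n : ℕ) (X : Fin n → Ω → ℝ) (p : Fin n → ℝ)
    (hmeas : ∀ i, Measurable (X i))
    (hindep : iIndepFun X ℙ)
    (h01 : ∀ i ω, X i ω = 0 ∨ X i ω = 1)
    (hp : ∀ i, (ℙ {ω | X i ω = 1}).toReal = p i)
    (γ μhat : ℝ) (hγ0 : 0 < γ) (hγ1 : γ < 1) (hμhat : 0 < μhat)
    (β δL : ℝ) (hβ : β = Real.log γ / μhat)
    (hδL : δL = (6 * β + Real.sqrt (36 * β ^ 2 - 18 * β * (9 - β))) / (9 - β))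
    (hE : ∫ ω, (∑ i, X i ω) ∂ℙ ≤ (1 - δL) * μhat) :
    (ℙ {ω | μhat ≤ ∑ i, X i ω}).toReal ≤ γ := by
  have hlogγ : Real.log γ < 0 := Real.log_neg hγ0 hγ1
  have hβneg : β < 0 := by rw [hβ]; exact div_neg_of_neg_of_pos hlogγ hμhat
  have h9β : (0:ℝ) < 9 - β := by linarith
  set Δ : ℝ := 36 * β ^ 2 - 18 * β * (9 - β) with hΔdef
  have hΔpos : 0 < Δ := by nlinarith
  set s : ℝ := Real.sqrt Δ with hsdef
  have hs : s ^ 2 = Δ := Real.sq_sqrt hΔpos.le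
  have hspos : 0 < s := Real.sqrt_pos.2 hΔpos
  have hδ0 : 0 ≤ δL := by
    rw [hδL]
    apply div_nonneg _ h9β.le
    nlinarith [hs, hspos, sq_nonneg (s + 6*β)]
  have h1 : δL * (9 - β) = 6 * β + s := by
    rw [hδL]; field_simp
  have h2 : (δL * (9 - β) - 6 * β) ^ 2 = Δ := by rw [h1]; ring_nf; linarith [hs]
  have hquad : 9 * δL ^ 2 = β * (δL ^ 2 + 12 * δL - 18) := by
    have h3 : (9 - β) * (9 * δL ^ 2 - β * (δL ^ 2 + 12 * δL - 18)) = 0 := by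
      linear_combination h2
    rcases mul_eq_zero.1 h3 with h | h
    · linarith
    · linarith
  have hμnn : 0 ≤ ∫ ω, (∑ i, X i ω) ∂ℙ := by
    apply integral_nonneg
    intro ω
    apply Finset.sum_nonneg
    intro i _
    rcases h01 i ω with h | h <;> rw [h] <;> norm_num
  have hloggamma : Real.log γ = β * μhat := by
    rw [hβ]; field_simp
  by_cases hδ1 : δL < 1
  · set t : ℝ := -Real.log (1 - δL) with htdef
    have h1δ : (0:ℝ) < 1 - δL := by linarith
    have ht : 0 ≤ t := by
      rw [htdef, neg_nonneg]
      exact Real.log_nonpos (by linarith) (by linarith)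
    have hc := chernoff_aux n X hmeas hindep h01 t μhat ht
    refine hc.trans ?_
    rw [← Real.exp_log hγ0]
    apply Real.exp_le_exp.2
    have het : Real.exp t = (1 - δL)⁻¹ := by
      rw [htdef, Real.exp_neg, Real.exp_log h1δ]
    have hc1 : 0 ≤ Real.exp t - 1 := by linarith [Real.one_le_exp ht]
    have step1 : (Real.exp t - 1) * (∫ ω, (∑ i, X i ω) ∂ℙ)
        ≤ (Real.exp t - 1) * ((1 - δL) * μhat) := mul_le_mul_of_nonneg_left hE hc1
    have step2 : (Real.exp t - 1) * ((1 - δL) * μhat) = δL * μhat := by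
      rw [het]; field_simp; ring
    have hQne : δL ^ 2 + 12 * δL - 18 ≠ 0 := by nlinarith
    have hβeq : β = 9 * δL ^ 2 / (δL ^ 2 + 12 * δL - 18) :=
      (eq_div_iff hQne).2 (by linarith [hquad])
    have hkey : δL + Real.log (1 - δL) ≤ β := by
      rw [hβeq]; exact key_ineq δL hδ0 hδ1
    have hmul : (δL + Real.log (1 - δL)) * μhat ≤ β * μhat :=
      mul_le_mul_of_nonneg_right hkey hμhat.le
    have hnegt : -t = Real.log (1 - δL) := by rw [htdef, neg_neg]
    calc -t * μhat + (Real.exp t - 1) * (∫ ω, (∑ i, X i ω) ∂ℙ)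
        ≤ Real.log (1 - δL) * μhat + δL * μhat := by
          rw [← hnegt] at *
          linarith [step1, step2]
      _ ≤ β * μhat := by linarith [hmul]
      _ = Real.log γ := hloggamma.symm
  · push_neg at hδ1
    have hμ0 : (∫ ω, (∑ i, X i ω) ∂ℙ) = 0 := by
      have : (1 - δL) * μhat ≤ 0 := mul_nonpos_of_nonpos_of_nonneg (by linarith) hμhat.le
      linarith [hE]
    set t : ℝ := -Real.log γ / μhat with htdef
    have ht : 0 ≤ t := by
      apply div_nonneg (by linarith) hμhat.le
    have hc := chernoff_aux n X hmeas hindep h01 t μhat ht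
    refine hc.trans ?_
    rw [hμ0, mul_zero, add_zero]
    have : -t * μhat = Real.log γ := by
      rw [htdef]; field_simp
    rw [this, Real.exp_log hγ0]
end

section
/- Let μ > 0, 0 < γ < 1, set β = (log γ)/μ and let δ_U = (-β + √(β² - 18β))/3 (the positive root of 3δ² + 2βδ + 6β = 0). Then δ_U - (1+δ_U)·log(1+δ_U) ≤ β. -/
private lemma log_pade_lower (x : ℝ) (hx : 0 ≤ x) :
    x * (6 + 5 * x) / ((6 + 2 * x) * (1 + x)) ≤ Real.log (1 + x) := by
  set f : ℝ → ℝ := fun z => Real.log (1 + z) - z * (6 + 5 * z) / ((6 + 2 * z) * (1 + z))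
    with hf
  have hder : ∀ y : ℝ, -1 < y → HasDerivAt f (y ^ 3 / ((1 + y) ^ 2 * (3 + y) ^ 2)) y := by
    intro y hy
    have h1 : (1 : ℝ) + y ≠ 0 := by nlinarith
    have h1' : (0:ℝ) < 1 + y := by linarith
    have h2 : (6 : ℝ) + 2 * y ≠ 0 := by nlinarith
    have h3 : (3 : ℝ) + y ≠ 0 := by nlinarith
    have hlog : HasDerivAt (fun z : ℝ => Real.log (1 + z)) (1 / (1 + y)) y := by
      have := (Real.hasDerivAt_log h1).comp y (((hasDerivAt_id y).const_add 1))
      exact this.congr_deriv (by simp)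
    have hnum : HasDerivAt (fun z : ℝ => z * (6 + 5 * z)) (6 + 10 * y) y := by
      have := ((hasDerivAt_id y).mul (((hasDerivAt_id y).const_mul 5).const_add 6))
      exact this.congr_deriv (by simp [id]; ring)
    have hden : HasDerivAt (fun z : ℝ => (6 + 2 * z) * (1 + z))
        (2 * (1 + y) + (6 + 2 * y) * 1) y := by
      have := (((hasDerivAt_id y).const_mul 2).const_add 6).mul
        (((hasDerivAt_id y)).const_add 1)
      exact this.congr_deriv (by simp [id])
    have hq := hnum.div hden (mul_ne_zero h2 h1)
    have := hlog.sub hq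
    exact this.congr_deriv (by
      rw [div_sub_div _ _ h1 (pow_ne_zero _ (mul_ne_zero h2 h1)),
        div_eq_div_iff (mul_ne_zero h1 (pow_ne_zero _ (mul_ne_zero h2 h1)))
          (mul_ne_zero (pow_ne_zero _ h1) (pow_ne_zero _ h3))]
      ring)
  have hmono : MonotoneOn f (Set.Ici (0 : ℝ)) := by
    apply monotoneOn_of_deriv_nonneg (convex_Ici 0)
    · intro y hy
      exact ((hder y (by simp at hy; linarith)).continuousAt).continuousWithinAt
    · intro y hy
      rw [interior_Ici] at hy
      exact ((hder y (by exact lt_trans (by norm_num) hy)).differentiableAt).differentiableWithinAt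
    · intro y hy
      rw [interior_Ici] at hy
      rw [(hder y (by exact lt_trans (by norm_num) hy)).deriv]
      have hy0 : 0 < y := hy
      positivity
  have h0 : f 0 = 0 := by simp [hf]
  have := hmono (Set.self_mem_Ici) (Set.mem_Ici.mpr hx) hx
  rw [h0] at this
  simp only [hf] at this
  linarith

theorem inversion_tail_upper (μ γ : ℝ) (hμ : 0 < μ) (hγ0 : 0 < γ) (hγ1 : γ < 1)
    (β δU : ℝ) (hβ : β = Real.log γ / μ)
    (hδU : δU = (-β + Real.sqrt (β ^ 2 - 18 * β)) / 3) :
    δU - (1 + δU) * Real.log (1 + δU) ≤ β := by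
  have hlogγ : Real.log γ < 0 := Real.log_neg hγ0 hγ1
  have hβneg : β ≤ 0 := by
    rw [hβ]
    exact le_of_lt (div_neg_of_neg_of_pos hlogγ hμ)
  have hdisc : 0 ≤ β ^ 2 - 18 * β := by nlinarith
  have hs : Real.sqrt (β ^ 2 - 18 * β) ^ 2 = β ^ 2 - 18 * β := Real.sq_sqrt hdisc
  have hsnn : 0 ≤ Real.sqrt (β ^ 2 - 18 * β) := Real.sqrt_nonneg _
  have hδ0 : 0 ≤ δU := by rw [hδU]; linarith
  have h3δ : 3 * δU + β = Real.sqrt (β ^ 2 - 18 * β) := by rw [hδU]; ring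
  have hquad : 3 * δU ^ 2 + 2 * β * δU + 6 * β = 0 := by
    have hsq : (3 * δU + β) ^ 2 = β ^ 2 - 18 * β := by rw [h3δ, hs]
    nlinarith [hsq]
  have hden : (0 : ℝ) < 6 + 2 * δU := by linarith
  have h1 : (0 : ℝ) < 1 + δU := by linarith
  have hβeq : β = -3 * δU ^ 2 / (6 + 2 * δU) := by
    field_simp
    nlinarith [hquad]
  have key := log_pade_lower δU hδ0
  have hL : δU * (6 + 5 * δU) / (6 + 2 * δU) ≤ (1 + δU) * Real.log (1 + δU) := by
    have h := mul_le_mul_of_nonneg_left key (le_of_lt h1)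
    have heq : (1 + δU) * (δU * (6 + 5 * δU) / ((6 + 2 * δU) * (1 + δU)))
        = δU * (6 + 5 * δU) / (6 + 2 * δU) := by
      field_simp
    rwa [heq] at h
  have hfinal : δU - δU * (6 + 5 * δU) / (6 + 2 * δU) = β := by
    rw [hβeq]
    field_simp
    ring
  linarith
end

section
/- For every real number x with 0 < x < 1, it holds that x - (1+x)·log(1+x) < (-15x² - 7x³)/(30 + 24x + 3x²). -/
open Real Set

private lemma hasDerivAt_G (t : ℝ) (ht : 0 ≤ t) :
    HasDerivAt (fun t : ℝ => Real.log (1 + t) - (6*t + 3*t^2) / (6 + 6*t + t^2))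
      (1/(1+t) - (36 + 36*t + 12*t^2)/(6 + 6*t + t^2)^2) t := by
  have h1 : (1:ℝ) + t ≠ 0 := by nlinarith
  have h2 : (6:ℝ) + 6*t + t^2 ≠ 0 := by nlinarith
  have hlog : HasDerivAt (fun t : ℝ => Real.log (1 + t)) (1/(1+t)) t := by
    have := ((hasDerivAt_id t).const_add 1).log h1
    simpa using this
  have hnum : HasDerivAt (fun t : ℝ => 6*t + 3*t^2) (6 + 3*(2*t)) t := by
    have := ((hasDerivAt_id t).const_mul 6).add (((hasDerivAt_pow 2 t)).const_mul 3)
    simpa [Pi.add_def] using this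
  have hden : HasDerivAt (fun t : ℝ => 6 + 6*t + t^2) (6 + 2*t) t := by
    have := (((hasDerivAt_id t).const_mul 6).const_add 6).add (hasDerivAt_pow 2 t)
    simpa [Pi.add_def] using this
  have hdiv := hnum.div hden h2
  have := hlog.sub hdiv
  have heq : (36 + 36*t + 12*t^2 : ℝ) =
      (6 + 3*(2*t)) * (6 + 6*t + t^2) - (6*t + 3*t^2) * (6 + 2*t) := by ring
  rw [heq]
  exact this

private lemma log_lower (x : ℝ) (h0 : 0 < x) (h1 : x ≤ 1) :
    (6*x + 3*x^2) / (6 + 6*x + x^2) < Real.log (1 + x) := by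
  set G := fun t : ℝ => Real.log (1 + t) - (6*t + 3*t^2) / (6 + 6*t + t^2) with hG
  have key : StrictMonoOn G (Icc 0 1) := by
    apply strictMonoOn_of_deriv_pos (convex_Icc 0 1)
    · intro t ht
      exact (hasDerivAt_G t ht.1).continuousAt.continuousWithinAt
    · intro t ht
      rw [interior_Icc] at ht
      rw [(hasDerivAt_G t ht.1.le).deriv]
      have h1 : (0:ℝ) < 1 + t := by linarith [ht.1]
      have h2 : (0:ℝ) < 6 + 6*t + t^2 := by nlinarith [ht.1]
      rw [sub_pos, div_lt_div_iff₀ (by positivity) h1]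
      nlinarith [pow_pos ht.1 4]
  have h0' : G 0 < G x := key (by simp) ⟨h0.le, h1⟩ h0
  have : G 0 = 0 := by simp [hG]
  rw [this] at h0'
  simpa [hG, sub_pos] using h0'

private lemma hasDerivAt_F (t : ℝ) (ht : 0 ≤ t) :
    HasDerivAt (fun t : ℝ => (-15 * t ^ 2 - 7 * t ^ 3) / (30 + 24 * t + 3 * t ^ 2)
        - (t - (1 + t) * Real.log (1 + t)))
      (Real.log (1+t) - (900*t + 990*t^2 + 336*t^3 + 21*t^4)/(30 + 24*t + 3*t^2)^2) t := by
  have h1 : (1:ℝ) + t ≠ 0 := by nlinarith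
  have h2 : (30:ℝ) + 24*t + 3*t^2 ≠ 0 := by nlinarith
  have hlog : HasDerivAt (fun t : ℝ => Real.log (1 + t)) (1/(1+t)) t := by
    have := ((hasDerivAt_id t).const_add 1).log h1
    simpa using this
  have hnum : HasDerivAt (fun t : ℝ => -15 * t^2 - 7 * t^3) (-15*(2*t) - 7*(3*t^2)) t := by
    have := (((hasDerivAt_pow 2 t)).const_mul (-15)).sub (((hasDerivAt_pow 3 t)).const_mul 7)
    simpa [Pi.sub_def] using this
  have hden : HasDerivAt (fun t : ℝ => 30 + 24*t + 3*t^2) (24 + 3*(2*t)) t := by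
    have := (((hasDerivAt_id t).const_mul 24).const_add 30).add (((hasDerivAt_pow 2 t)).const_mul 3)
    simpa [Pi.add_def] using this
  have hdiv := hnum.div hden (by simpa using h2)
  have hmul : HasDerivAt (fun t : ℝ => (1 + t) * Real.log (1 + t))
      (1 * Real.log (1+t) + (1+t) * (1/(1+t))) t :=
    ((hasDerivAt_id t).const_add 1).mul hlog
  have hsub : HasDerivAt (fun t : ℝ => t - (1 + t) * Real.log (1 + t))
      (1 - (1 * Real.log (1+t) + (1+t) * (1/(1+t)))) t := (hasDerivAt_id t).sub hmul
  have := hdiv.sub hsub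
  refine this.congr_deriv ?_
  field_simp
  ring

theorem pade_cubic_upper (x : ℝ) (h0 : 0 < x) (h1 : x < 1) :
    x - (1 + x) * Real.log (1 + x) <
      (-15 * x ^ 2 - 7 * x ^ 3) / (30 + 24 * x + 3 * x ^ 2) := by
  set F := fun t : ℝ => (-15 * t ^ 2 - 7 * t ^ 3) / (30 + 24 * t + 3 * t ^ 2)
      - (t - (1 + t) * Real.log (1 + t)) with hF
  have key : StrictMonoOn F (Icc 0 1) := by
    apply strictMonoOn_of_deriv_pos (convex_Icc 0 1)
    · intro t ht
      exact (hasDerivAt_F t ht.1).continuousAt.continuousWithinAt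
    · intro t ht
      rw [interior_Icc] at ht
      obtain ⟨ht0, ht1⟩ := ht
      rw [(hasDerivAt_F t ht0.le).deriv]
      have hlow := log_lower t ht0 ht1.le
      have hd1 : (0:ℝ) < 6 + 6*t + t^2 := by nlinarith
      have hd2 : (0:ℝ) < (30 + 24*t + 3*t^2)^2 := by positivity
      rw [sub_pos]
      calc (900*t + 990*t^2 + 336*t^3 + 21*t^4)/(30 + 24*t + 3*t^2)^2
          ≤ (6*t + 3*t^2) / (6 + 6*t + t^2) := by
            rw [div_le_div_iff₀ hd2 hd1]
            nlinarith [pow_pos ht0 5, pow_pos ht0 6]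
        _ < Real.log (1 + t) := hlow
  have h0' : F 0 < F x := key (by simp) ⟨h0.le, h1.le⟩ h0
  have hF0 : F 0 = 0 := by simp [hF]
  rw [hF0] at h0'
  simpa [hF, sub_pos] using h0'
end

section
/- For every real number x with 0 < x < 1, it holds that -x - (1-x)·log(1-x) < (-210x² + 125x³)/(420 - 390x + 60x² + 3x³). -/
theorem pade_cubic_lower (x : ℝ) (h0 : 0 < x) (h1 : x < 1) :
    -x - (1 - x) * Real.log (1 - x) <
      (-210 * x ^ 2 + 125 * x ^ 3) / (420 - 390 * x + 60 * x ^ 2 + 3 * x ^ 3) := by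
  set G : ℝ → ℝ := fun t =>
    Real.log (1 - t) +
      (420 * t - 600 * t ^ 2 + 185 * t ^ 3 + 3 * t ^ 4) /
        ((1 - t) * (420 - 390 * t + 60 * t ^ 2 + 3 * t ^ 3)) with hG
  have hQx : (0:ℝ) < 420 - 390 * x + 60 * x ^ 2 + 3 * x ^ 3 := by nlinarith
  have h1x : (0:ℝ) < 1 - x := by linarith
  -- continuity on Icc 0 x
  have hc : ContinuousOn G (Set.Icc 0 x) := by
    intro t ht
    obtain ⟨ht0, htx⟩ := ht
    have h1t : (0:ℝ) < 1 - t := by linarith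
    have hQt : (0:ℝ) < 420 - 390 * t + 60 * t ^ 2 + 3 * t ^ 3 := by nlinarith
    apply ContinuousWithinAt.add
    · exact ((Real.continuousAt_log h1t.ne').comp
        ((continuous_const.sub continuous_id).continuousAt)).continuousWithinAt
    · have hnum : Continuous fun y : ℝ => 420 * y - 600 * y ^ 2 + 185 * y ^ 3 + 3 * y ^ 4 := by
        continuity
      have hden : Continuous fun y : ℝ => (1 - y) * (420 - 390 * y + 60 * y ^ 2 + 3 * y ^ 3) := by
        continuity
      exact (ContinuousAt.div hnum.continuousAt hden.continuousAt
        (ne_of_gt (mul_pos h1t hQt))).continuousWithinAt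
  -- derivative positive on interior
  have hd : ∀ t ∈ interior (Set.Icc 0 x), 0 < deriv G t := by
    intro t ht
    rw [interior_Icc] at ht
    obtain ⟨ht0, htx⟩ := ht
    have h1t : (0:ℝ) < 1 - t := by linarith
    have hQt : (0:ℝ) < 420 - 390 * t + 60 * t ^ 2 + 3 * t ^ 3 := by nlinarith
    have hDt : (0:ℝ) < (1 - t) * (420 - 390 * t + 60 * t ^ 2 + 3 * t ^ 3) :=
      mul_pos h1t hQt
    have hlog : HasDerivAt (fun y : ℝ => Real.log (1 - y)) ((1 - t)⁻¹ * (-1)) t := by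
      exact (Real.hasDerivAt_log h1t.ne').comp t ((hasDerivAt_id t).const_sub 1)
    have hM : HasDerivAt (fun y : ℝ => 420 * y - 600 * y ^ 2 + 185 * y ^ 3 + 3 * y ^ 4)
        (420 - 1200 * t + 555 * t ^ 2 + 12 * t ^ 3) t := by
      have h := (((hasDerivAt_pow 1 t).const_mul (420:ℝ)).sub
          ((hasDerivAt_pow 2 t).const_mul (600:ℝ))).add
          (((hasDerivAt_pow 3 t).const_mul (185:ℝ)).add
          ((hasDerivAt_pow 4 t).const_mul (3:ℝ)))
      convert h using 1
      · rfl
      · rfl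
      · funext y; simp only [Pi.add_apply, Pi.sub_apply]; ring
      · norm_num
        ring
    have hD : HasDerivAt
        (fun y : ℝ => (1 - y) * (420 - 390 * y + 60 * y ^ 2 + 3 * y ^ 3))
        (-810 + 900 * t - 171 * t ^ 2 - 12 * t ^ 3) t := by
      have h := (((hasDerivAt_pow 1 t).const_mul (-810:ℝ)).add
          ((hasDerivAt_pow 2 t).const_mul (450:ℝ))).add
          (((hasDerivAt_pow 3 t).const_mul (-57:ℝ)).add
          (((hasDerivAt_pow 4 t).const_mul (-3:ℝ)).add (hasDerivAt_const t (420:ℝ))))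
      convert h using 1
      · rfl
      · rfl
      · funext y; simp only [Pi.add_apply, Pi.sub_apply]; ring
      · norm_num
        ring
    have hdiv : HasDerivAt (fun y : ℝ =>
        (420 * y - 600 * y ^ 2 + 185 * y ^ 3 + 3 * y ^ 4) /
          ((1 - y) * (420 - 390 * y + 60 * y ^ 2 + 3 * y ^ 3)))
        (((420 - 1200 * t + 555 * t ^ 2 + 12 * t ^ 3) *
            ((1 - t) * (420 - 390 * t + 60 * t ^ 2 + 3 * t ^ 3)) -
          (420 * t - 600 * t ^ 2 + 185 * t ^ 3 + 3 * t ^ 4) *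
            (-810 + 900 * t - 171 * t ^ 2 - 12 * t ^ 3)) /
          ((1 - t) * (420 - 390 * t + 60 * t ^ 2 + 3 * t ^ 3)) ^ 2) t :=
      hM.div hD hDt.ne'
    have hGd : HasDerivAt G ((1 - t)⁻¹ * (-1) +
        ((420 - 1200 * t + 555 * t ^ 2 + 12 * t ^ 3) *
            ((1 - t) * (420 - 390 * t + 60 * t ^ 2 + 3 * t ^ 3)) -
          (420 * t - 600 * t ^ 2 + 185 * t ^ 3 + 3 * t ^ 4) *
            (-810 + 900 * t - 171 * t ^ 2 - 12 * t ^ 3)) /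
          ((1 - t) * (420 - 390 * t + 60 * t ^ 2 + 3 * t ^ 3)) ^ 2) t := hlog.add hdiv
    rw [hGd.deriv]
    have key : (1 - t)⁻¹ * (-1) +
        ((420 - 1200 * t + 555 * t ^ 2 + 12 * t ^ 3) *
            ((1 - t) * (420 - 390 * t + 60 * t ^ 2 + 3 * t ^ 3)) -
          (420 * t - 600 * t ^ 2 + 185 * t ^ 3 + 3 * t ^ 4) *
            (-810 + 900 * t - 171 * t ^ 2 - 12 * t ^ 3)) /
          ((1 - t) * (420 - 390 * t + 60 * t ^ 2 + 3 * t ^ 3)) ^ 2 =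
        t ^ 6 * (735 + 9 * t) /
          ((1 - t) * (420 - 390 * t + 60 * t ^ 2 + 3 * t ^ 3)) ^ 2 := by
      rw [inv_mul_eq_div, div_add_div _ _ h1t.ne' (pow_ne_zero 2 (mul_pos h1t hQt).ne'), div_eq_div_iff (mul_ne_zero h1t.ne' (pow_ne_zero 2 (mul_pos h1t hQt).ne')) (pow_ne_zero 2 (mul_pos h1t hQt).ne')]
      ring
    rw [key]
    positivity
  have hmono := strictMonoOn_of_deriv_pos (convex_Icc 0 x) hc hd
  have hG0 : G 0 = 0 := by simp [hG]
  have hGx : 0 < G x := by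
    have := hmono (Set.left_mem_Icc.mpr h0.le) (Set.right_mem_Icc.mpr h0.le) h0
    rwa [hG0] at this
  -- unpack
  rw [hG] at hGx
  simp only at hGx
  have hlogx : Real.log (1 - x) >
      -((420 * x - 600 * x ^ 2 + 185 * x ^ 3 + 3 * x ^ 4) /
        ((1 - x) * (420 - 390 * x + 60 * x ^ 2 + 3 * x ^ 3))) := by linarith
  have hmul : (1 - x) * Real.log (1 - x) >
      -((420 * x - 600 * x ^ 2 + 185 * x ^ 3 + 3 * x ^ 4) /
        (420 - 390 * x + 60 * x ^ 2 + 3 * x ^ 3)) := by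
    have h := (mul_lt_mul_iff_right₀ h1x).mpr hlogx
    calc (1 - x) * Real.log (1 - x) >
        (1 - x) * -((420 * x - 600 * x ^ 2 + 185 * x ^ 3 + 3 * x ^ 4) /
          ((1 - x) * (420 - 390 * x + 60 * x ^ 2 + 3 * x ^ 3))) := h
      _ = -((420 * x - 600 * x ^ 2 + 185 * x ^ 3 + 3 * x ^ 4) /
          (420 - 390 * x + 60 * x ^ 2 + 3 * x ^ 3)) := by
        field_simp [h1x.ne', hQx.ne']
  have hfin : (-210 * x ^ 2 + 125 * x ^ 3) / (420 - 390 * x + 60 * x ^ 2 + 3 * x ^ 3) =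
      -x + (420 * x - 600 * x ^ 2 + 185 * x ^ 3 + 3 * x ^ 4) /
        (420 - 390 * x + 60 * x ^ 2 + 3 * x ^ 3) := by
    rw [div_eq_iff hQx.ne', add_mul, div_mul_cancel₀ _ hQx.ne']
    ring
  rw [hfin]
  linarith
end
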